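/- arXiv:2308.00639 — 4 statements merged into one kernel-verified Lean document; each statement's English description precedes it below -/
import Mathlib

section
/- Let I ⊂ S = K[x_1,…,x_n] be a monomial ideal with G(I) = {u_1,…,u_r} ordered so that deg(u_1) ≤ ⋯ ≤ deg(u_r), and let O denote this order. For each i, write (u_1,…,u_{i−1}) : u_i = (w_{i,1},…,w_{i,ℓ_i}) with the w_{i,k} the minimal monomial generators, let A_i = ∪_k supp(w_{i,k}), and write [n] = {s_{i,1},…,s_{i,n}} with A_i = {s_{i,1},…,s_{i,n_i}}. Set f_{i,j} = x_{s_{i,j}} u_i and L_{i,j} = (f_{i',j'} : i' < i, or i' = i and j' < j) : f_{i,j}. Then for j > n_i one has L_{i,j} = (x_{s_{i,ℓ}} : 1 ≤ ℓ ≤ j−1). -/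
/-! # Framework: monomial ideals in `S = K[x_1,…,x_n]`

Monomials are encoded by their exponent vectors in `Fin n →₀ ℕ`; divisibility of
monomials corresponds to the pointwise order, and `u : v = u / gcd(u,v)` corresponds
to truncated subtraction of exponent vectors. -/

open MvPolynomial

noncomputable section

/-- The graded maximal ideal `m = (x_1, …, x_n)` of `K[x_1,…,x_n]`. -/
def maxIdeal (n : ℕ) (K : Type) [Field K] : Ideal (MvPolynomial (Fin n) K) :=
  Ideal.span (Set.range X)

/-- Exponent vectors of monomials in `n` variables. -/
abbrev Expo (n : ℕ) := Fin n →₀ ℕ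

/-- The monomial `x^s` with exponent vector `s`. -/
def mon (n : ℕ) (K : Type) [Field K] (s : Expo n) : MvPolynomial (Fin n) K :=
  monomial s 1

/-- The degree of the monomial with exponent vector `s`. -/
def mdeg {n : ℕ} (s : Expo n) : ℕ := s.sum fun _ e => e

/-- `I` is a monomial ideal: it is generated by monomials. -/
def IsMonomialIdeal (n : ℕ) (K : Type) [Field K]
    (I : Ideal (MvPolynomial (Fin n) K)) : Prop :=
  ∃ A : Set (Expo n), I = Ideal.span (mon n K '' A)

/-- `G(I)`: the (exponent vectors of the) minimal monomial generators of `I`, i.e. the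
monomials of `I` that are minimal with respect to divisibility. -/
def MinGens (n : ℕ) (K : Type) [Field K] (I : Ideal (MvPolynomial (Fin n) K)) :
    Set (Expo n) :=
  {s | mon n K s ∈ I ∧ ∀ t : Expo n, mon n K t ∈ I → t ≤ s → t = s}

/-- Given an order `u_0 < u_1 < ⋯` on monomials, the colon ideal
`(u_0, …, u_{i-1}) : u_i`. -/
def colonPrev (n : ℕ) (K : Type) [Field K] {r : ℕ} (u : Fin r → Expo n) (i : Fin r) :
    Ideal (MvPolynomial (Fin n) K) :=
  Submodule.colon (Ideal.span (mon n K '' (u '' {l : Fin r | l < i})))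
    (Ideal.span {mon n K (u i)})

/-- The ideal `J` is generated by (a set of) variables. -/
def genByVars (n : ℕ) (K : Type) [Field K] (J : Ideal (MvPolynomial (Fin n) K)) : Prop :=
  ∃ T : Set (Fin n), J = Ideal.span ((fun p => (X p : MvPolynomial (Fin n) K)) '' T)

/-- `u` is an admissible order on `G(J)`: it enumerates the minimal monomial
generators, and each colon ideal `(u_0,…,u_{i-1}) : u_i` is generated by variables. -/
def IsLinQuotOrder (n : ℕ) (K : Type) [Field K] (J : Ideal (MvPolynomial (Fin n) K))
    {r : ℕ} (u : Fin r → Expo n) : Prop :=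
  Function.Injective u ∧ Set.range u = MinGens n K J ∧
    ∀ i : Fin r, genByVars n K (colonPrev n K u i)

/-- `J` has linear quotients. -/
def HasLinearQuotients (n : ℕ) (K : Type) [Field K]
    (J : Ideal (MvPolynomial (Fin n) K)) : Prop :=
  ∃ (r : ℕ) (u : Fin r → Expo n), IsLinQuotOrder n K J u

/-- The order `u` is degree increasing. -/
def DegIncr {n r : ℕ} (u : Fin r → Expo n) : Prop :=
  ∀ i i' : Fin r, i ≤ i' → mdeg (u i) ≤ mdeg (u i')

/-- The numerical invariant `λ_{I,O,u_i} = Σ_k (deg w_{i,k} - 1)`, where the `w_{i,k}`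
are the minimal monomial generators of `(u_0,…,u_{i-1}) : u_i`. -/
def lamOrd (n : ℕ) (K : Type) [Field K] {r : ℕ} (u : Fin r → Expo n) (i : Fin r) : ℕ :=
  ∑ᶠ w ∈ MinGens n K (colonPrev n K u i), (mdeg w - 1)

end

noncomputable section

/-- `A_i`: the union of the supports of the minimal monomial generators of
`(u_0,…,u_{i-1}) : u_i`. -/
def Asupp (n : ℕ) (K : Type) [Field K] {r : ℕ} (u : Fin r → Expo n) (i : Fin r) :
    Set (Fin n) :=
  {p | ∃ w ∈ MinGens n K (colonPrev n K u i), p ∈ w.support}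

/-- The exponent vector of `f_{i,j} = x_{s_{i,j}} u_i`, where `s_{i,·} = σ i` is a
chosen enumeration of the variables. -/
def fExp {n r : ℕ} (u : Fin r → Expo n) (σ : Fin r → (Fin n ≃ Fin n))
    (i : Fin r) (j : Fin n) : Expo n :=
  u i + Finsupp.single (σ i j) 1

/-- The exponent vectors of the monomials `f_{i',j'}` preceding `f_{i,j}` in the
lexicographic order `O'`. -/
def prevSet {n r : ℕ} (u : Fin r → Expo n) (σ : Fin r → (Fin n ≃ Fin n))
    (i : Fin r) (j : Fin n) : Set (Expo n) :=
  {v | ∃ (i' : Fin r) (j' : Fin n), (i' < i ∨ (i' = i ∧ j' < j)) ∧ v = fExp u σ i' j'}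

/-- `L_{i,j} = (f_{i',j'} : i' < i, or i' = i and j' < j) : f_{i,j}`. -/
def Lcolon (n : ℕ) (K : Type) [Field K] {r : ℕ} (u : Fin r → Expo n)
    (σ : Fin r → (Fin n ≃ Fin n)) (i : Fin r) (j : Fin n) :
    Ideal (MvPolynomial (Fin n) K) :=
  Submodule.colon (Ideal.span (mon n K '' prevSet u σ i j))
    (Ideal.span {mon n K (fExp u σ i j)})

end

-- Membership of `g · x^f` in a monomial ideal, in terms of the support of `g`.
lemma mul_monomial_mem_span_iff {n : ℕ} {K : Type} [Field K]
    (g : MvPolynomial (Fin n) K) (f : Expo n) (S : Set (Expo n)) :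
    g * monomial f (1 : K) ∈ Ideal.span ((fun s => monomial s (1 : K)) '' S) ↔
      ∀ d ∈ g.support, ∃ v ∈ S, v ≤ d + f := by
  have hs : (g * monomial f (1 : K)).support =
      g.support.map (addRightEmbedding f) := by
    rw [← single_eq_monomial]
    exact AddMonoidAlgebra.support_coeff_mul_single g 1 (by simp) f
  rw [MvPolynomial.mem_ideal_span_monomial_image, hs]
  constructor
  · intro h d hd
    exact h (d + f) (Finset.mem_map.2 ⟨d, hd, rfl⟩)
  · rintro h D hD
    rcases Finset.mem_map.1 hD with ⟨d, hd, rfl⟩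
    exact h d hd

/-- **(Ficarra–Herzog–Moradi, proof of Theorem 1.5).** Let `I` be a monomial ideal with
`G(I) = {u_1,…,u_r}` ordered so that `deg u_1 ≤ ⋯ ≤ deg u_r`. For each `i`, let `A_i`
be the union of the supports of the minimal monomial generators of
`(u_1,…,u_{i-1}) : u_i`, and let `σ i` be an enumeration `s_{i,·}` of the variables
whose first `n_i` values exhaust `A_i`. Set `f_{i,j} = x_{σ i j} · u_i` and
`L_{i,j} = (f_{i',j'} : i' < i, or i' = i and j' < j) : f_{i,j}`. Then for `j` beyond
the first `n_i` positions, `L_{i,j} = (x_{σ i ℓ} : ℓ < j)`. (Indices are 0-based, so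
"`j > n_i`" reads `n_i ≤ j`.) -/
theorem L_colon_beyond_support (n : ℕ) (K : Type) [Field K]
    (I : Ideal (MvPolynomial (Fin n) K)) (hI : IsMonomialIdeal n K I)
    (r : ℕ) (u : Fin r → Expo n) (hinj : Function.Injective u)
    (hrange : Set.range u = MinGens n K I) (hdeg : DegIncr u)
    (σ : Fin r → (Fin n ≃ Fin n)) (nn : Fin r → ℕ)
    (hA : ∀ i : Fin r, Asupp n K u i = ⇑(σ i) '' {t : Fin n | (t : ℕ) < nn i}) :
    ∀ (i : Fin r) (j : Fin n), nn i ≤ (j : ℕ) →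
      Lcolon n K u σ i j =
        Ideal.span ((fun ℓ : Fin n => (X (σ i ℓ) : MvPolynomial (Fin n) K)) ''
          {ℓ : Fin n | ℓ < j}) := by
  classical
  intro i j hj
  -- the key pointwise claim
  have main : ∀ d : Expo n,
      (∃ v ∈ prevSet u σ i j, v ≤ d + fExp u σ i j) ↔
        ∃ ℓ : Fin n, ℓ < j ∧ Finsupp.single (σ i ℓ) 1 ≤ d := by
    intro d
    constructor
    · rintro ⟨v, ⟨i', j', hij, rfl⟩, hle⟩
      rcases hij with hi' | ⟨heq, hj'⟩
      · -- case `i' < i`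
        set w : Expo n := u i' - u i with hw
        -- `x^w ∈ (u_0,…,u_{i-1}) : u_i`
        have hwmem : mon n K w ∈ colonPrev n K u i := by
          rw [colonPrev, Ideal.mem_colon_span_singleton]
          have : mon n K w * mon n K (u i) = monomial (w + u i) (1 : K) := by
            simp [mon, monomial_mul]
          rw [this, show mon n K '' (u '' {l : Fin r | l < i}) =
              (fun s => monomial s (1 : K)) '' (u '' {l : Fin r | l < i}) from rfl,
            MvPolynomial.mem_ideal_span_monomial_image]
          intro xi hxi
          rw [support_monomial, if_neg one_ne_zero, Finset.mem_singleton] at hxi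
          subst hxi
          exact ⟨u i', ⟨i', hi', rfl⟩, by rw [hw]; exact le_tsub_add⟩
        -- pick a minimal monomial `t ≤ w` in the colon ideal
        obtain ⟨t, ⟨htw, htmem⟩, htmin⟩ :=
          (wellFounded_lt (α := Expo n)).has_min
            {t : Expo n | t ≤ w ∧ mon n K t ∈ colonPrev n K u i} ⟨w, le_rfl, hwmem⟩
        have htMG : t ∈ MinGens n K (colonPrev n K u i) := by
          refine ⟨htmem, fun t' ht' hle' => ?_⟩
          by_contra hne
          exact htmin t' ⟨hle'.trans htw, ht'⟩ (lt_of_le_of_ne hle' hne)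
        -- `t ≠ 0` since `u i` is a minimal generator
        have ht0 : t ≠ 0 := by
          rintro rfl
          have h1 : mon n K 0 * mon n K (u i) = monomial (u i) (1 : K) := by
            simp [mon, monomial_mul]
          have := htmem
          rw [colonPrev, Ideal.mem_colon_span_singleton, h1,
            show mon n K '' (u '' {l : Fin r | l < i}) =
              (fun s => monomial s (1 : K)) '' (u '' {l : Fin r | l < i}) from rfl,
            MvPolynomial.mem_ideal_span_monomial_image] at this
          obtain ⟨si, hsi, hsile⟩ :=
            this (u i) (by rw [support_monomial, if_neg one_ne_zero]; simp)
          obtain ⟨l, hl, rfl⟩ := hsi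
          have hui : u i ∈ MinGens n K I := by rw [← hrange]; exact ⟨i, rfl⟩
          have hul : u l ∈ MinGens n K I := by rw [← hrange]; exact ⟨l, rfl⟩
          have : u l = u i := hui.2 (u l) hul.1 hsile
          exact absurd (hinj this) (ne_of_lt hl)
        obtain ⟨p, hp⟩ := Finsupp.support_nonempty_iff.2 ht0
        -- `p ∈ A_i`, so `p = σ i ℓ` with `ℓ < n i ≤ j`
        have hpA : p ∈ Asupp n K u i := ⟨t, htMG, hp⟩
        rw [hA i] at hpA
        obtain ⟨ℓ, hℓ, rfl⟩ := hpA
        have hℓj : ℓ < j := by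
          rw [Fin.lt_def]; exact lt_of_lt_of_le hℓ hj
        refine ⟨ℓ, hℓj, Finsupp.single_le_iff.2 ?_⟩
        -- `w (σ i ℓ) > 0`, hence `u i' > u i` at that coordinate
        have hwp : 0 < w (σ i ℓ) :=
          Nat.pos_of_ne_zero fun h =>
            (Finsupp.mem_support_iff.1 hp)
              (Nat.le_antisymm (h ▸ (Finsupp.le_def.1 htw) (σ i ℓ)) (Nat.zero_le _))
        have hwp' : u i (σ i ℓ) < u i' (σ i ℓ) := by
          have := hwp
          rw [hw, Finsupp.tsub_apply] at this
          omega
        have hle' := (Finsupp.le_def.1 hle) (σ i ℓ)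
        have hne : σ i j ≠ σ i ℓ := fun h => (ne_of_lt hℓj).symm ((σ i).injective h)
        simp only [fExp, Finsupp.add_apply, Finsupp.single_apply, if_neg hne] at hle'
        omega
      · -- case `i' = i`, `j' < j`
        rw [heq] at hle
        refine ⟨j', hj', Finsupp.single_le_iff.2 ?_⟩
        have hle' := (Finsupp.le_def.1 hle) (σ i j')
        have hne : σ i j ≠ σ i j' := fun h => (ne_of_lt hj').symm ((σ i).injective h)
        simp only [fExp, Finsupp.add_apply, Finsupp.single_apply, if_neg hne,
          eq_self_iff_true, if_true] at hle'
        omega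
    · rintro ⟨ℓ, hℓ, hle⟩
      refine ⟨fExp u σ i ℓ, ⟨i, ℓ, Or.inr ⟨rfl, hℓ⟩, rfl⟩, ?_⟩
      rw [Finsupp.le_def]
      intro q
      have := (Finsupp.le_def.1 hle) q
      simp only [fExp, Finsupp.add_apply, Finsupp.single_apply] at this ⊢
      by_cases hq : σ i ℓ = q
      · simp only [if_pos hq] at this ⊢
        split <;> omega
      · simp only [if_neg hq] at this ⊢
        split <;> omega
  -- now translate both ideal memberships via the support description
  ext g
  show g ∈ Submodule.colon
      (Ideal.span ((fun s => monomial s (1 : K)) '' prevSet u σ i j))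
      (Ideal.span {(monomial (fExp u σ i j) (1 : K) : MvPolynomial (Fin n) K)}) ↔ _
  rw [Ideal.mem_colon_span_singleton, mul_monomial_mem_span_iff]
  have h2 : (fun ℓ : Fin n => (X (σ i ℓ) : MvPolynomial (Fin n) K)) '' {ℓ : Fin n | ℓ < j} =
      (fun s => monomial s (1 : K)) ''
        ((fun ℓ : Fin n => Finsupp.single (σ i ℓ) 1) '' {ℓ : Fin n | ℓ < j}) := by
    rw [Set.image_image]; rfl
  rw [h2, MvPolynomial.mem_ideal_span_monomial_image]
  refine forall₂_congr fun d _ => ?_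
  rw [main d]
  constructor
  · rintro ⟨ℓ, hℓ, hle⟩
    exact ⟨Finsupp.single (σ i ℓ) 1, ⟨ℓ, hℓ, rfl⟩, hle⟩
  · rintro ⟨s, ⟨ℓ, hℓ, rfl⟩, hle⟩
    exact ⟨ℓ, hℓ, hle⟩
end

section
/- Let I ⊂ S = K[x_1,…,x_n] be a monomial ideal with G(I) = {u_1,…,u_r} ordered so that deg(u_1) ≤ ⋯ ≤ deg(u_r). For each i, write (u_1,…,u_{i−1}) : u_i = (w_{i,1},…,w_{i,ℓ_i}), let A_i = ∪_k supp(w_{i,k}), and write [n] = {s_{i,1},…,s_{i,n}} with A_i = {s_{i,1},…,s_{i,n_i}}. Set f_{i,j} = x_{s_{i,j}} u_i and L_{i,j} = (f_{i',j'} : i' < i, or i' = i and j' < j) : f_{i,j}. Fix j ≤ n_i, and suppose x_{s_{i,j}} divides w_{i,k} exactly for 1 ≤ k ≤ q_i. Then L_{i,j} = (w_{i,k}/x_{s_{i,j}} : 1 ≤ k ≤ q_i) + (w_{i,k} : q_i < k ≤ ℓ_i) + (x_{s_{i,ℓ}} : 1 ≤ ℓ ≤ j−1). -/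
/-! # Framework: monomial ideals in `S = K[x_1,…,x_n]`

Monomials are encoded by their exponent vectors in `Fin n →₀ ℕ`; divisibility of
monomials corresponds to the pointwise order, and `u : v = u / gcd(u,v)` corresponds
to truncated subtraction of exponent vectors. -/

open MvPolynomial

section Helpers

open MvPolynomial Finsupp

variable {n : ℕ} {K : Type} [Field K]

lemma mon_img (A : Set (Expo n)) :
    mon n K '' A = (fun s => monomial s (1 : K)) '' A := rfl

lemma mon_mul (a b : Expo n) : mon n K a * mon n K b = mon n K (a + b) := by
  simp [mon, monomial_mul]

lemma mon_mem_span_iff {A : Set (Expo n)} {t : Expo n} :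
    mon n K t ∈ Ideal.span (mon n K '' A) ↔ ∃ a ∈ A, a ≤ t := by
  rw [mon_img, MvPolynomial.mem_ideal_span_monomial_image]
  simp [mon, MvPolynomial.support_monomial]

lemma exists_minGen_le {J : Ideal (MvPolynomial (Fin n) K)} {t : Expo n}
    (ht : mon n K t ∈ J) : ∃ w ∈ MinGens n K J, w ≤ t := by
  set s : Set (Expo n) := {t' | t' ≤ t ∧ mon n K t' ∈ J} with hs
  have hfin : s.Finite := (Set.finite_Iic t).subset fun x hx => hx.1
  obtain ⟨w, hw, hmin⟩ := hfin.exists_minimal ⟨t, le_refl t, ht⟩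
  refine ⟨w, ⟨hw.2, fun t'' h2 hle => ?_⟩, hw.1⟩
  exact le_antisymm hle (hmin ⟨hle.trans hw.1, h2⟩ hle)

lemma mdeg_pos {w : Expo n} (hw : w ≠ 0) : 0 < mdeg w := by
  obtain ⟨a, ha⟩ : ∃ a, w a ≠ 0 := by
    by_contra h; push_neg at h; exact hw (Finsupp.ext h)
  have hmem : a ∈ w.support := Finsupp.mem_support_iff.mpr ha
  have : w a ≤ mdeg w :=
    Finset.single_le_sum (f := fun x => w x) (fun i _ => Nat.zero_le _) hmem
  omega

lemma mdeg_add (a b : Expo n) : mdeg (a + b) = mdeg a + mdeg b :=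
  Finsupp.sum_add_index' (fun _ => rfl) (fun _ _ _ => rfl)

lemma colonPrev_dom {r : ℕ} {u : Fin r → Expo n} {i : Fin r} {w : Expo n}
    (hw : mon n K w ∈ colonPrev n K u i) : ∃ l, l < i ∧ u l ≤ w + u i := by
  rw [colonPrev, Ideal.mem_colon_span_singleton, mon_mul, mon_mem_span_iff] at hw
  obtain ⟨a, ⟨l, hl, rfl⟩, hle⟩ := hw
  exact ⟨l, hl, hle⟩

lemma colonPrev_of_dom {r : ℕ} {u : Fin r → Expo n} {i : Fin r} {w : Expo n}
    {l : Fin r} (hl : l < i) (hle : u l ≤ w + u i) :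
    mon n K w ∈ colonPrev n K u i := by
  rw [colonPrev, Ideal.mem_colon_span_singleton, mon_mul, mon_mem_span_iff]
  exact ⟨u l, ⟨l, hl, rfl⟩, hle⟩

lemma minGen_w_ne_zero {I : Ideal (MvPolynomial (Fin n) K)}
    {r : ℕ} {u : Fin r → Expo n} (hinj : Function.Injective u)
    (hrange : Set.range u = MinGens n K I) {i : Fin r} {w : Expo n}
    (hw : mon n K w ∈ colonPrev n K u i) : w ≠ 0 := by
  rintro rfl
  obtain ⟨l, hl, hle⟩ := colonPrev_dom hw
  rw [zero_add] at hle
  have hui : u i ∈ MinGens n K I := hrange ▸ Set.mem_range_self i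
  have hul : u l ∈ MinGens n K I := hrange ▸ Set.mem_range_self l
  have := hui.2 (u l) hul.1 hle
  exact absurd (hinj this) hl.ne

end Helpers

/-- **(Ficarra–Herzog–Moradi, proof of Theorem 1.5).** -/
theorem L_colon_within_support (n : ℕ) (K : Type) [Field K]
    (I : Ideal (MvPolynomial (Fin n) K)) (hI : IsMonomialIdeal n K I)
    (r : ℕ) (u : Fin r → Expo n) (hinj : Function.Injective u)
    (hrange : Set.range u = MinGens n K I) (hdeg : DegIncr u)
    (σ : Fin r → (Fin n ≃ Fin n)) (nn : Fin r → ℕ)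
    (hA : ∀ i : Fin r, Asupp n K u i = ⇑(σ i) '' {t : Fin n | (t : ℕ) < nn i}) :
    ∀ (i : Fin r) (j : Fin n), (j : ℕ) < nn i →
      Lcolon n K u σ i j =
        Ideal.span (mon n K ''
          ({v | ∃ w ∈ MinGens n K (colonPrev n K u i),
              Finsupp.single (σ i j) 1 ≤ w ∧ v = w - Finsupp.single (σ i j) 1} ∪
           {w | w ∈ MinGens n K (colonPrev n K u i) ∧ ¬ Finsupp.single (σ i j) 1 ≤ w} ∪
           {v | ∃ ℓ : Fin n, ℓ < j ∧ v = Finsupp.single (σ i ℓ) 1})) := by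
  intro i j _hj
  classical
  apply le_antisymm
  · -- Lcolon ⊆ span Gen
    intro x hx
    have hx' : x * mon n K (fExp u σ i j) ∈
        Ideal.span (mon n K '' prevSet u σ i j) := Ideal.mem_colon_span_singleton.mp hx
    rw [mon_img, MvPolynomial.mem_ideal_span_monomial_image] at hx'
    rw [mon_img, MvPolynomial.mem_ideal_span_monomial_image]
    intro t ht
    have hcoeff : MvPolynomial.coeff (t + fExp u σ i j)
        (x * mon n K (fExp u σ i j)) = MvPolynomial.coeff t x := by
      rw [show mon n K (fExp u σ i j) = MvPolynomial.monomial (fExp u σ i j) (1:K) from rfl]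
      rw [MvPolynomial.coeff_mul_monomial, mul_one]
    have hmem : t + fExp u σ i j ∈ (x * mon n K (fExp u σ i j)).support := by
      rw [MvPolynomial.mem_support_iff, hcoeff]
      exact MvPolynomial.mem_support_iff.mp ht
    obtain ⟨v, ⟨i', j', hij, rfl⟩, hvle⟩ := hx' _ hmem
    rcases hij with hi' | ⟨hi2, hj'⟩
    · -- i' < i
      have hw0 : mon n K (u i' - u i) ∈ colonPrev n K u i :=
        colonPrev_of_dom hi' le_tsub_add
      obtain ⟨w, hwMG, hwle⟩ := exists_minGen_le hw0
      have hkey : w - Finsupp.single (σ i j) 1 ≤ t := by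
        rw [Finsupp.le_def]; intro c
        have h1 : w c ≤ u i' c - u i c := by
          simpa [Finsupp.tsub_apply] using (Finsupp.le_def.mp hwle) c
        have h2 : u i' c ≤ t c + u i c + Finsupp.single (σ i j) 1 c := by
          have := (Finsupp.le_def.mp hvle) c
          simp only [fExp, Finsupp.add_apply] at this ⊢
          omega
        have h3 : Finsupp.single (σ i j) 1 c ≤ 1 := by
          rw [Finsupp.single_apply]; split <;> omega
        rw [Finsupp.tsub_apply]
        omega
      by_cases hesw : Finsupp.single (σ i j) 1 ≤ w
      · exact ⟨w - Finsupp.single (σ i j) 1, Or.inl (Or.inl ⟨w, hwMG, hesw, rfl⟩), hkey⟩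
      · refine ⟨w, Or.inl (Or.inr ⟨hwMG, hesw⟩), ?_⟩
        have hws : w (σ i j) = 0 := by
          by_contra h
          exact hesw (by rw [Finsupp.single_le_iff]; omega)
        rw [Finsupp.le_def]; intro c
        have := (Finsupp.le_def.mp hkey) c
        rw [Finsupp.tsub_apply, Finsupp.single_apply] at this
        rcases eq_or_ne (σ i j) c with rfl | hne
        · simpa [hws] using Nat.zero_le _
        · simpa [hne] using this
    · -- i' = i, j' < j
      rw [hi2] at hvle
      refine ⟨Finsupp.single (σ i j') 1, Or.inr ⟨j', hj', rfl⟩, ?_⟩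
      have hne : σ i j ≠ σ i j' := fun h => hj'.ne ((σ i).injective h).symm
      have h1 : 1 ≤ t (σ i j') := by
        have h := (Finsupp.le_def.mp hvle) (σ i j')
        simp only [fExp, Finsupp.add_apply] at h
        rw [Finsupp.single_eq_same, Finsupp.single_eq_of_ne' hne] at h
        omega
      rw [Finsupp.le_def]; intro c
      rw [Finsupp.single_apply]
      split
      · next h => rw [← h]; exact h1
      · exact Nat.zero_le _
  · -- span Gen ⊆ Lcolon
    rw [Ideal.span_le]
    rintro _ ⟨g, hg, rfl⟩
    rw [SetLike.mem_coe, Lcolon, Ideal.mem_colon_span_singleton, mon_mul, mon_mem_span_iff]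
    rcases hg with (⟨w, hw, hsle, rfl⟩ | ⟨hw, hns⟩) | ⟨ℓ, hℓ, rfl⟩
    · -- g = w - es with es ≤ w
      obtain ⟨l, hl, hle⟩ := colonPrev_dom hw.1
      have hw0 : w ≠ 0 := minGen_w_ne_zero hinj hrange hw.1
      have hne : u l ≠ w + u i := by
        intro h
        have h1 := congrArg mdeg h
        rw [mdeg_add] at h1
        have h2 := hdeg l i hl.le
        have h3 := mdeg_pos hw0
        omega
      obtain ⟨p, hp⟩ : ∃ p, u l p < w p + u i p := by
        by_contra h; push_neg at h
        refine hne (le_antisymm hle ?_)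
        rw [Finsupp.le_def]; intro c
        simpa [Finsupp.add_apply] using h c
      refine ⟨fExp u σ l ((σ l).symm p), ⟨l, (σ l).symm p, Or.inl hl, rfl⟩, ?_⟩
      have heq : (w - Finsupp.single (σ i j) 1) + fExp u σ i j = w + u i := by
        rw [fExp, add_comm (u i) (Finsupp.single (σ i j) 1), ← add_assoc,
          tsub_add_cancel_of_le hsle]
      rw [heq, fExp, Equiv.apply_symm_apply, Finsupp.le_def]
      intro c
      have h1 := (Finsupp.le_def.mp hle) c
      simp only [Finsupp.add_apply, Finsupp.single_apply] at h1 ⊢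
      rcases eq_or_ne p c with rfl | hpc
      · rw [if_pos rfl]; omega
      · rw [if_neg hpc]; omega
    · -- g = w with ¬ es ≤ w
      obtain ⟨l, hl, hle⟩ := colonPrev_dom hw.1
      refine ⟨fExp u σ l ((σ l).symm (σ i j)), ⟨l, (σ l).symm (σ i j), Or.inl hl, rfl⟩, ?_⟩
      rw [fExp, Equiv.apply_symm_apply, fExp]
      calc u l + Finsupp.single (σ i j) 1 ≤ (g + u i) + Finsupp.single (σ i j) 1 :=
            add_le_add_left hle _
        _ = g + (u i + Finsupp.single (σ i j) 1) := by rw [add_assoc]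
    · -- g = x_{σ i ℓ}, ℓ < j
      refine ⟨fExp u σ i ℓ, ⟨i, ℓ, Or.inr ⟨rfl, hℓ⟩, rfl⟩, ?_⟩
      rw [fExp, fExp]
      calc u i + Finsupp.single (σ i ℓ) 1
            = Finsupp.single (σ i ℓ) 1 + u i := add_comm _ _
        _ ≤ Finsupp.single (σ i ℓ) 1 + (u i + Finsupp.single (σ i j) 1) := by
            exact add_le_add_right (self_le_add_right _ _) _
end

section
/- Let I ⊂ S = K[x_1,…,x_n] be a monomial ideal and let O : u_1 < ⋯ < u_r be a degree-increasing order on G(I). Then there exists an order O_1 on the minimal monomial generators G(mI) of mI, each of the form f = x_j u_i, such that for every f = x_j u_i ∈ G(mI): λ_{mI, O_1, f} ≤ λ_{I, O, u_i}, and if λ_{I, O, u_i} > 0 then λ_{mI, O_1, f} < λ_{I, O, u_i}. In particular, if I has linear quotients with respect to O, then mI has linear quotients with respect to O_1. -/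
/-! # Framework: monomial ideals in `S = K[x_1,…,x_n]`

Monomials are encoded by their exponent vectors in `Fin n →₀ ℕ`; divisibility of
monomials corresponds to the pointwise order, and `u : v = u / gcd(u,v)` corresponds
to truncated subtraction of exponent vectors. -/

open MvPolynomial

noncomputable section Foundations
namespace LamAux

variable {n : ℕ} {K : Type} [Field K]

lemma mon_mul (s t : Expo n) : mon n K s * mon n K t = mon n K (s + t) := by
  simp [mon, monomial_mul]

lemma X_eq_mon (j : Fin n) : (X j : MvPolynomial (Fin n) K) = mon n K (Finsupp.single j 1) := rfl

lemma mem_span_mon {A : Set (Expo n)} {s : Expo n} :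
    mon n K s ∈ Ideal.span (mon n K '' A) ↔ ∃ a ∈ A, a ≤ s := by
  have h : (mon n K '' A) = ((fun s => monomial s (1 : K)) '' A) := rfl
  classical
  rw [h, mem_ideal_span_monomial_image]
  constructor
  · intro h'
    exact h' s (by simp [mon, support_monomial])
  · intro h' t ht
    rw [mon, support_monomial, if_neg (one_ne_zero)] at ht
    simp only [Finset.mem_singleton] at ht
    exact ht ▸ h'

/-- mdeg basic lemmas -/
lemma mdeg_add (s t : Expo n) : mdeg (s + t) = mdeg s + mdeg t := by
  simp [mdeg, Finsupp.sum_add_index']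

lemma mdeg_eq_sum (s : Expo n) : mdeg s = ∑ k, s k := by
  rw [mdeg, Finsupp.sum_fintype]; intro; rfl

lemma mdeg_zero : mdeg (0 : Expo n) = 0 := by simp [mdeg]

lemma mdeg_eq_zero {s : Expo n} : mdeg s = 0 ↔ s = 0 := by
  rw [mdeg_eq_sum]
  rw [Finset.sum_eq_zero_iff]
  constructor
  · intro h; ext k; exact h k (Finset.mem_univ k)
  · intro h k _; simp [h]

lemma mdeg_mono {s t : Expo n} (h : s ≤ t) : mdeg s ≤ mdeg t := by
  rw [mdeg_eq_sum, mdeg_eq_sum]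
  exact Finset.sum_le_sum fun k _ => Finsupp.le_def.mp h k

lemma eq_of_le_of_mdeg_le {s t : Expo n} (h : s ≤ t) (hd : mdeg t ≤ mdeg s) : s = t := by
  have h1 := tsub_add_cancel_of_le h
  have h2 : mdeg (t - s) = 0 := by
    have := mdeg_add (t - s) s
    rw [h1] at this
    omega
  rw [mdeg_eq_zero] at h2
  rw [← h1, h2, zero_add]

lemma mdeg_single (j : Fin n) (k : ℕ) : mdeg (Finsupp.single j k) = k := by
  simp [mdeg, Finsupp.sum_single_index]

lemma mdeg_pos_of_ne_zero {s : Expo n} (h : s ≠ 0) : 1 ≤ mdeg s := by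
  rcases Nat.eq_zero_or_pos (mdeg s) with h0 | h0
  · exact absurd (mdeg_eq_zero.mp h0) h
  · exact h0

/-- minimal elements of a set of exponent vectors -/
def MinE (A : Set (Expo n)) : Set (Expo n) := {a ∈ A | ∀ b ∈ A, b ≤ a → b = a}

lemma MinE_subset (A : Set (Expo n)) : MinE A ⊆ A := fun _ h => h.1

lemma exists_minE {A : Set (Expo n)} {s : Expo n} (hs : s ∈ A) :
    ∃ a ∈ MinE A, a ≤ s := by
  obtain ⟨d, hd⟩ : ∃ d, mdeg s = d := ⟨_, rfl⟩
  induction d using Nat.strong_induction_on generalizing s with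
  | _ d ih =>
    by_cases hmin : ∀ b ∈ A, b ≤ s → b = s
    · exact ⟨s, ⟨hs, hmin⟩, le_rfl⟩
    · push_neg at hmin
      obtain ⟨b, hb, hbs, hne⟩ := hmin
      have hlt : mdeg b < d := by
        rcases lt_or_ge (mdeg b) d with h | h
        · exact h
        · exact absurd (eq_of_le_of_mdeg_le hbs (hd ▸ h)) hne
      obtain ⟨a, ha, hab⟩ := ih (mdeg b) hlt hb rfl
      exact ⟨a, ha, hab.trans hbs⟩

lemma mem_span_mon_minE {A : Set (Expo n)} {s : Expo n} :
    mon n K s ∈ Ideal.span (mon n K '' A) ↔ ∃ a ∈ MinE A, a ≤ s := by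
  rw [mem_span_mon]
  constructor
  · rintro ⟨a, ha, has⟩
    obtain ⟨b, hb, hba⟩ := exists_minE ha
    exact ⟨b, hb, hba.trans has⟩
  · rintro ⟨a, ha, has⟩
    exact ⟨a, ha.1, has⟩

lemma span_mon_le_span_mon {A B : Set (Expo n)}
    (h : ∀ a ∈ A, ∃ b ∈ B, b ≤ a) :
    Ideal.span (mon n K '' A) ≤ Ideal.span (mon n K '' B) := by
  rw [Ideal.span_le]
  rintro x ⟨a, ha, rfl⟩
  exact mem_span_mon.mpr (h a ha)

lemma span_mon_congr {A B : Set (Expo n)}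
    (hAB : ∀ a ∈ A, ∃ b ∈ B, b ≤ a) (hBA : ∀ b ∈ B, ∃ a ∈ A, a ≤ b) :
    Ideal.span (mon n K '' A) = Ideal.span (mon n K '' B) :=
  le_antisymm (span_mon_le_span_mon hAB) (span_mon_le_span_mon hBA)

lemma span_minE (A : Set (Expo n)) :
    Ideal.span (mon n K '' A) = Ideal.span (mon n K '' MinE A) :=
  span_mon_congr (fun a ha => exists_minE ha) (fun b hb => ⟨b, hb.1, le_rfl⟩)

lemma minGens_span_mon (A : Set (Expo n)) :
    MinGens n K (Ideal.span (mon n K '' A)) = MinE A := by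
  ext s
  constructor
  · rintro ⟨hs, hmin⟩
    obtain ⟨a, ha, has⟩ := mem_span_mon.mp hs
    have : a = s := hmin a (mem_span_mon.mpr ⟨a, ha, le_rfl⟩) has
    subst this
    refine ⟨ha, fun b hb hba => ?_⟩
    exact hmin b (mem_span_mon.mpr ⟨b, hb, le_rfl⟩) hba
  · rintro ⟨hs, hmin⟩
    refine ⟨mem_span_mon.mpr ⟨s, hs, le_rfl⟩, fun t ht hts => ?_⟩
    obtain ⟨a, ha, hat⟩ := mem_span_mon.mp ht
    have : a = s := hmin a ha (hat.trans hts)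
    subst this
    exact le_antisymm hts hat

/-- colon of a monomial ideal by a monomial -/
lemma colon_span_mon (A : Set (Expo n)) (f : Expo n) :
    Submodule.colon (Ideal.span (mon n K '' A)) (Ideal.span {mon n K f})
      = Ideal.span (mon n K '' ((fun a => a - f) '' A)) := by
  ext p
  have h1 : (mon n K '' A) = ((fun s => monomial s (1 : K)) '' A) := rfl
  have h2 : (mon n K '' ((fun a => a - f) '' A))
      = ((fun s => monomial s (1 : K)) '' ((fun a => a - f) '' A)) := rfl
  have hcol : p ∈ Submodule.colon (Ideal.span (mon n K '' A)) (Ideal.span {mon n K f}) ↔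
      p • (mon n K f) ∈ Ideal.span (mon n K '' A) := Ideal.mem_colon_span_singleton
  rw [hcol, smul_eq_mul, h1, h2, mem_ideal_span_monomial_image,
    mem_ideal_span_monomial_image]
  constructor
  · intro h s hs
    have hsf : s + f ∈ (p * mon n K f).support := by
      rw [mem_support_iff, mon, coeff_mul_monomial']
      rw [if_pos le_add_self]
      simpa [add_tsub_cancel_right] using mem_support_iff.mp hs
    obtain ⟨a, ha, haf⟩ := h (s + f) hsf
    exact ⟨a - f, ⟨a, ha, rfl⟩, tsub_le_iff_right.mpr haf⟩
  · intro h t ht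
    rw [mem_support_iff, mon, coeff_mul_monomial'] at ht
    by_cases hft : f ≤ t
    · rw [if_pos hft] at ht
      have htf : t - f ∈ p.support := by
        rw [mem_support_iff]; intro hc; rw [hc] at ht; simp at ht
      obtain ⟨b, ⟨a, ha, rfl⟩, hb⟩ := h (t - f) htf
      refine ⟨a, ha, ?_⟩
      calc a ≤ a - f + f := le_tsub_add
        _ ≤ t - f + f := add_le_add hb le_rfl
        _ = t := tsub_add_cancel_of_le hft
    · rw [if_neg hft] at ht; exact absurd rfl ht

end LamAux
end Foundations

noncomputable section KeyMachinery
namespace LamAux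
variable {n r : ℕ}

abbrev LKey (n r : ℕ) := Lex (Fin r × Lex (Bool × Fin n))

lemma lkey_fst_le_of_le {k k' : LKey n r} (h : k ≤ k') : (ofLex k).1 ≤ (ofLex k').1 := by
  rcases (Prod.Lex.le_iff (x := k) (y := k')).mp h with h1 | ⟨h1, _⟩
  · exact h1.le
  · exact h1.le

lemma lkey_fst_le_of_lt {k k' : LKey n r} (h : k < k') : (ofLex k).1 ≤ (ofLex k').1 :=
  lkey_fst_le_of_le h.le

lemma lkey_lt_of_fst_lt {k k' : LKey n r} (h : (ofLex k).1 < (ofLex k').1) : k < k' :=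
  (Prod.Lex.lt_iff (x := k) (y := k')).mpr (Or.inl h)

variable (u : Fin r → Expo n) (w0 : Fin r → Expo n)

/-- `x_j * u_i` as exponent vector, for `p = (i, j)`. -/
def rep (p : Fin r × Fin n) : Expo n := Finsupp.single p.2 1 + u p.1

/-- exponent vectors of the obvious generators of `m*I` -/
def BS : Set (Expo n) := Set.range (rep u)

/-- minimal generators of `m*I`, combinatorially -/
def GmI : Set (Expo n) := MinE (BS u)

def keyOf (p : Fin r × Fin n) : LKey n r :=
  toLex (p.1, toLex (decide ((w0 p.1) p.2 = 0), p.2))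

lemma keyOf_fst (p : Fin r × Fin n) : (ofLex (keyOf w0 p)).1 = p.1 := rfl
lemma keyOf_snd (p : Fin r × Fin n) : (ofLex (ofLex (keyOf w0 p)).2).2 = p.2 := rfl

/-- recover the monomial from a key -/
def rep' (k : LKey n r) : Expo n := rep u ((ofLex k).1, (ofLex (ofLex k).2).2)

lemma rep'_keyOf (p : Fin r × Fin n) : rep' u (keyOf w0 p) = rep u p := rfl

lemma keyOf_lt_keyOf_of_bool {i : Fin r} {k j : Fin n}
    (hk : (w0 i) k ≠ 0) (hj : (w0 i) j = 0) :
    keyOf w0 (i, k) < keyOf w0 (i, j) := by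
  refine Prod.Lex.lt_iff.mpr (Or.inr ⟨rfl, ?_⟩)
  refine Prod.Lex.lt_iff.mpr (Or.inl ?_)
  show decide ((w0 i) k = 0) < decide ((w0 i) j = 0)
  simp [hk, hj]

open scoped Classical in
/-- the finset of keys: minimal key of each element of `G(mI)` -/
def Fkey : Finset (LKey n r) :=
  (Finset.univ.image (keyOf w0)).filter
    (fun k => rep' u k ∈ GmI u ∧ ∀ p, rep u p = rep' u k → k ≤ keyOf w0 p)

lemma Fkey_eq_keyOf {k : LKey n r} (hk : k ∈ Fkey u w0) :
    k = keyOf w0 ((ofLex k).1, (ofLex (ofLex k).2).2) := by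
  classical
  obtain ⟨p, _, hp⟩ := Finset.mem_image.mp (Finset.mem_filter.mp hk).1
  rw [← hp]; rfl

lemma Fkey_mem_GmI {k : LKey n r} (hk : k ∈ Fkey u w0) : rep' u k ∈ GmI u := by
  classical
  exact (Finset.mem_filter.mp hk).2.1

lemma Fkey_min {k : LKey n r} (hk : k ∈ Fkey u w0) :
    ∀ p, rep u p = rep' u k → k ≤ keyOf w0 p := by
  classical
  exact (Finset.mem_filter.mp hk).2.2

lemma exists_key {x : Expo n} (hx : x ∈ GmI u) :
    ∃ k ∈ Fkey u w0, rep' u k = x := by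
  classical
  have hxB : x ∈ BS u := hx.1
  obtain ⟨p₀, hp₀⟩ := hxB
  have hPne : (Finset.univ.filter (fun p => rep u p = x)).Nonempty := ⟨p₀, by simp [hp₀]⟩
  have hKne : ((Finset.univ.filter (fun p => rep u p = x)).image (keyOf w0)).Nonempty := hPne.image _
  obtain ⟨p₁, hp₁P, hp₁⟩ := Finset.mem_image.mp (Finset.min'_mem _ hKne)
  have hrep1 : rep u p₁ = x := (Finset.mem_filter.mp hp₁P).2
  set k := Finset.min' _ hKne with hk
  have hrk : rep' u k = x := by rw [← hp₁, rep'_keyOf]; exact hrep1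
  refine ⟨k, ?_, hrk⟩
  refine Finset.mem_filter.mpr ⟨Finset.mem_image.mpr ⟨p₁, Finset.mem_univ _, hp₁⟩, ?_, ?_⟩
  · rw [hrk]; exact hx
  · intro p hp
    rw [hrk] at hp
    exact Finset.min'_le _ _ (Finset.mem_image.mpr ⟨p, Finset.mem_filter.mpr ⟨Finset.mem_univ _, hp⟩, rfl⟩)

lemma key_unique {k k' : LKey n r} (hk : k ∈ Fkey u w0) (hk' : k' ∈ Fkey u w0)
    (h : rep' u k = rep' u k') : k = k' := by
  have h1 : k ≤ k' := by
    have := Fkey_min u w0 hk (((ofLex k').1, (ofLex (ofLex k').2).2)) h.symm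
    rwa [← Fkey_eq_keyOf u w0 hk'] at this
  have h2 : k' ≤ k := by
    have := Fkey_min u w0 hk' (((ofLex k).1, (ofLex (ofLex k).2).2)) h
    rwa [← Fkey_eq_keyOf u w0 hk] at this
  exact le_antisymm h1 h2

/-- the enumeration of `G(mI)` -/
def gfun (t : Fin (Fkey u w0).card) : Expo n :=
  rep' u ((Fkey u w0).orderIsoOfFin rfl t : LKey n r)

lemma gfun_mem (t) : gfun u w0 t ∈ GmI u :=
  Fkey_mem_GmI u w0 ((Fkey u w0).orderIsoOfFin rfl t).2

lemma gfun_inj : Function.Injective (gfun u w0) := by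
  intro t t' h
  have := key_unique u w0 ((Fkey u w0).orderIsoOfFin rfl t).2
    ((Fkey u w0).orderIsoOfFin rfl t').2 h
  have h2 : ((Fkey u w0).orderIsoOfFin rfl t) = ((Fkey u w0).orderIsoOfFin rfl t') :=
    Subtype.ext this
  exact ((Fkey u w0).orderIsoOfFin rfl).injective h2

lemma range_gfun : Set.range (gfun u w0) = GmI u := by
  ext x
  constructor
  · rintro ⟨t, rfl⟩; exact gfun_mem u w0 t
  · intro hx
    obtain ⟨k, hk, hrk⟩ := exists_key u w0 hx
    exact ⟨((Fkey u w0).orderIsoOfFin rfl).symm ⟨k, hk⟩, by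
      simp only [gfun, OrderIso.apply_symm_apply]; exact hrk⟩

lemma prev_char (t : Fin (Fkey u w0).card) :
    gfun u w0 '' {s | s < t}
      = {x | ∃ k ∈ Fkey u w0, rep' u k = x ∧ k < ((Fkey u w0).orderIsoOfFin rfl t : LKey n r)} := by
  ext x
  constructor
  · rintro ⟨s, hs, rfl⟩
    refine ⟨((Fkey u w0).orderIsoOfFin rfl s : LKey n r),
      ((Fkey u w0).orderIsoOfFin rfl s).2, rfl, ?_⟩
    exact Subtype.coe_lt_coe.mpr (((Fkey u w0).orderIsoOfFin rfl).lt_iff_lt.mpr hs)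
  · rintro ⟨k, hk, rfl, hlt⟩
    refine ⟨((Fkey u w0).orderIsoOfFin rfl).symm ⟨k, hk⟩, ?_, ?_⟩
    · have : (((Fkey u w0).orderIsoOfFin rfl) (((Fkey u w0).orderIsoOfFin rfl).symm ⟨k, hk⟩)) < ((Fkey u w0).orderIsoOfFin rfl t) := by
        rw [OrderIso.apply_symm_apply]
        exact Subtype.coe_lt_coe.mp hlt
      exact ((Fkey u w0).orderIsoOfFin rfl).lt_iff_lt.mp this
    · simp only [gfun, OrderIso.apply_symm_apply]

end LamAux
end KeyMachinery

noncomputable section PerT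
namespace LamAux
variable {n r : ℕ}

/-! ### small arithmetic lemmas on exponent vectors -/

lemma tsub_single_eq_self {w : Expo n} {j : Fin n} (h : w j = 0) :
    w - Finsupp.single j 1 = w := by
  ext l
  rw [Finsupp.tsub_apply, Finsupp.single_apply]
  rcases eq_or_ne j l with rfl | hne
  · simp [h]
  · simp [hne]

lemma mdeg_tsub_single {w : Expo n} {j : Fin n} (h : w j ≠ 0) :
    mdeg (w - Finsupp.single j 1) + 1 = mdeg w := by
  have hle : Finsupp.single j 1 ≤ w := Finsupp.single_le_iff.mpr (by omega)
  have := mdeg_add (w - Finsupp.single j 1) (Finsupp.single j 1)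
  rw [tsub_add_cancel_of_le hle, mdeg_single] at this
  omega

lemma tsub_rep {a : Expo n} {k j : Fin n} (h : k ≠ j) :
    (Finsupp.single k 1 + a) - (Finsupp.single j 1 + a) = Finsupp.single k 1 := by
  ext l
  rw [Finsupp.tsub_apply]
  simp only [Finsupp.add_apply, Finsupp.single_apply]
  split_ifs with h1 h2 h2
  · exact absurd (h1.trans h2.symm) h
  · omega
  · omega
  · omega

lemma add_single_le {a s : Expo n} {k : Fin n} (h1 : a ≤ s) (h2 : a k < s k) :
    Finsupp.single k 1 + a ≤ s := by
  rw [Finsupp.le_def]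
  intro l
  rw [Finsupp.add_apply, Finsupp.single_apply]
  rcases eq_or_ne k l with rfl | hne
  · rw [if_pos rfl]; omega
  · simpa [hne] using Finsupp.le_def.mp h1 l

lemma add_single_sub_le {a f : Expo n} {k : Fin n} (h : a k < f k) :
    (Finsupp.single k 1 + a) - f ≤ a - f := by
  rw [Finsupp.le_def]
  intro l
  rw [Finsupp.tsub_apply, Finsupp.tsub_apply, Finsupp.add_apply, Finsupp.single_apply]
  rcases eq_or_ne k l with rfl | hne
  · rw [if_pos rfl]; omega
  · simp [hne]

lemma exists_lt_of_not_le {a b : Expo n} (h : ¬ a ≤ b) : ∃ k, b k < a k := by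
  by_contra hc
  push_neg at hc
  exact h (Finsupp.le_def.mpr fun k => hc k)

lemma exists_apply_ne_zero {a : Expo n} (h : a ≠ 0) : ∃ k, a k ≠ 0 := by
  by_contra hc
  push_neg at hc
  exact h (Finsupp.ext fun k => hc k)

lemma mdeg_lt_of_le_of_ne {a b : Expo n} (h : a ≤ b) (hne : a ≠ b) : mdeg a < mdeg b := by
  rcases lt_or_ge (mdeg a) (mdeg b) with h1 | h1
  · exact h1
  · exact absurd (eq_of_le_of_mdeg_le h h1) hne

lemma mdeg_eq_one {z : Expo n} (h : mdeg z = 1) : ∃ k, z = Finsupp.single k 1 := by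
  have hz : z ≠ 0 := by intro hc; rw [hc, mdeg_zero] at h; omega
  obtain ⟨k, hk⟩ := exists_apply_ne_zero hz
  have hle : Finsupp.single k 1 ≤ z := Finsupp.single_le_iff.mpr (by omega)
  exact ⟨k, (eq_of_le_of_mdeg_le hle (by rw [mdeg_single, h])).symm⟩

/-! ### per-index data -/

variable (u w0 : Fin r → Expo n)

def Wset (i : Fin r) : Set (Expo n) := (fun l => u l - u i) '' {l : Fin r | l < i}

def ktf (t : Fin (Fkey u w0).card) : LKey n r := ((Fkey u w0).orderIsoOfFin rfl t : LKey n r)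
def itf (t : Fin (Fkey u w0).card) : Fin r := (ofLex (ktf u w0 t)).1
def jtf (t : Fin (Fkey u w0).card) : Fin n := (ofLex (ofLex (ktf u w0 t)).2).2

lemma gfun_eq_rep (t) : gfun u w0 t = rep u (itf u w0 t, jtf u w0 t) := rfl

lemma rep_def (u : Fin r → Expo n) (i : Fin r) (j : Fin n) :
    rep u (i, j) = Finsupp.single j 1 + u i := rfl

lemma ktf_eq (t) : ktf u w0 t = keyOf w0 (itf u w0 t, jtf u w0 t) :=
  Fkey_eq_keyOf u w0 ((Fkey u w0).orderIsoOfFin rfl t).2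

lemma ktf_min (t) : ∀ p, rep u p = gfun u w0 t → ktf u w0 t ≤ keyOf w0 p :=
  Fkey_min u w0 ((Fkey u w0).orderIsoOfFin rfl t).2

lemma mdeg_rep (i : Fin r) (j : Fin n) : mdeg (rep u (i, j)) = mdeg (u i) + 1 := by
  rw [rep, mdeg_add, mdeg_single, add_comm]

/-- the degree-one candidate generators coming from the same block -/
def Vt (t : Fin (Fkey u w0).card) : Set (Expo n) :=
  {v | ∃ j'', v = Finsupp.single j'' 1 ∧ rep u (itf u w0 t, j'') ∈ GmI u ∧
    keyOf w0 (itf u w0 t, j'') < ktf u w0 t}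

/-- the candidate generators coming from earlier blocks -/
def Wt (t : Fin (Fkey u w0).card) : Set (Expo n) :=
  (fun i' => u i' - gfun u w0 t) '' {i' : Fin r | i' < itf u w0 t}

lemma Wt_eq (t) :
    Wt u w0 t = (fun w => w - Finsupp.single (jtf u w0 t) 1) '' Wset u (itf u w0 t) := by
  rw [Wt, Wset, Set.image_image]
  apply Set.image_congr
  intro l _
  show u l - gfun u w0 t = u l - u (itf u w0 t) - Finsupp.single (jtf u w0 t) 1
  rw [gfun_eq_rep, rep, tsub_add_eq_tsub_tsub_swap]

variable {u w0}
variable (hdeg : DegIncr u)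
include hdeg

lemma not_ft_le {t : Fin (Fkey u w0).card} {i' : Fin r} (h : i' ≤ itf u w0 t) :
    ¬ (gfun u w0 t ≤ u i') := by
  intro hc
  have h1 := mdeg_mono hc
  rw [gfun_eq_rep, mdeg_rep] at h1
  have h2 := hdeg i' (itf u w0 t) h
  omega

lemma divisor_key_lt {t : Fin (Fkey u w0).card} {x : Expo n} (hx : x ∈ GmI u)
    {i' : Fin r} {j' : Fin n} (hi' : i' < itf u w0 t) (hle : x ≤ rep u (i', j')) :
    ∃ k ∈ Fkey u w0, rep' u k = x ∧ k < ktf u w0 t := by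
  obtain ⟨k, hk, hrk⟩ := exists_key u w0 hx
  refine ⟨k, hk, hrk, ?_⟩
  apply lkey_lt_of_fst_lt
  show (ofLex k).1 < itf u w0 t
  by_contra hc
  push_neg at hc
  have hxr : x = rep u ((ofLex k).1, (ofLex (ofLex k).2).2) := hrk.symm
  have h1 : mdeg x = mdeg (u (ofLex k).1) + 1 := by rw [hxr, mdeg_rep]
  have h2 : mdeg x ≤ mdeg (u i') + 1 := by
    have := mdeg_mono hle
    rwa [mdeg_rep] at this
  have h3 : mdeg (u (itf u w0 t)) ≤ mdeg (u (ofLex k).1) := hdeg _ _ hc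
  have h4 : mdeg (u i') ≤ mdeg (u (itf u w0 t)) := hdeg _ _ hi'.le
  have hx2 : x = rep u (i', j') := eq_of_le_of_mdeg_le hle (by rw [mdeg_rep]; omega)
  have h5 := Fkey_min u w0 hk (i', j') (by rw [hrk]; exact hx2.symm)
  have h6 : (ofLex k).1 ≤ i' := lkey_fst_le_of_le h5
  exact absurd (lt_of_le_of_lt (hc.trans h6) hi') (lt_irrefl _)

lemma wt_ne_zero {t : Fin (Fkey u w0).card} {i' : Fin r} (hi' : i' < itf u w0 t) :
    u i' - gfun u w0 t ≠ 0 := by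
  intro h0
  have hle : u i' ≤ gfun u w0 t := tsub_eq_zero_iff_le.mp h0
  have hnle : ¬ (gfun u w0 t ≤ u i') := not_ft_le hdeg hi'.le
  obtain ⟨k₀, hk₀⟩ := exists_lt_of_not_le hnle
  have hrep : rep u (i', k₀) ≤ gfun u w0 t := add_single_le hle hk₀
  have hft := gfun_mem u w0 t
  have heq : rep u (i', k₀) = gfun u w0 t := hft.2 _ ⟨(i', k₀), rfl⟩ hrep
  have h5 := ktf_min u w0 t (i', k₀) heq
  have h6 : itf u w0 t ≤ i' := lkey_fst_le_of_le h5
  exact absurd (lt_of_lt_of_le hi' h6) (lt_irrefl _)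

lemma prev_dominated (t : Fin (Fkey u w0).card) :
    ∀ x ∈ gfun u w0 '' {s | s < t}, ∃ y ∈ Vt u w0 t ∪ Wt u w0 t, y ≤ x - gfun u w0 t := by
  intro x hx
  rw [prev_char] at hx
  obtain ⟨k, hk, hrk, hlt⟩ := hx
  have hxr : x = rep u ((ofLex k).1, (ofLex (ofLex k).2).2) := hrk.symm
  rcases (Prod.Lex.lt_iff (x := k) (y := ktf u w0 t)).mp hlt with h1 | ⟨h1, h2⟩
  · refine ⟨u (ofLex k).1 - gfun u w0 t, Or.inr ⟨(ofLex k).1, h1, rfl⟩, ?_⟩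
    apply tsub_le_tsub_right
    rw [hxr, rep_def]
    exact le_add_self
  · have e1 : itf u w0 t = (ofLex k).1 := h1.symm
    have hne : (ofLex (ofLex k).2).2 ≠ jtf u w0 t := by
      intro hc
      have hkt : k = ktf u w0 t := by
        rw [ktf_eq, e1, ← hc]
        exact Fkey_eq_keyOf u w0 hk
      rw [hkt] at hlt
      exact absurd hlt (lt_irrefl _)
    refine ⟨Finsupp.single (ofLex (ofLex k).2).2 1, Or.inl ⟨(ofLex (ofLex k).2).2, rfl, ?_, ?_⟩, ?_⟩
    · rw [e1, ← hxr]; exact hrk ▸ Fkey_mem_GmI u w0 hk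
    · rw [e1, ← Fkey_eq_keyOf u w0 hk]; exact hlt
    · have e2 : x - gfun u w0 t = Finsupp.single (ofLex (ofLex k).2).2 1 := by
        rw [hxr, gfun_eq_rep, rep_def, rep_def, e1]
        exact tsub_rep hne
      exact le_of_eq e2.symm

lemma dominating_prev (t : Fin (Fkey u w0).card) :
    ∀ y ∈ Vt u w0 t ∪ Wt u w0 t,
      ∃ x ∈ gfun u w0 '' {s | s < t}, x - gfun u w0 t ≤ y := by
  rintro y (⟨j'', rfl, hrep, hklt⟩ | ⟨i', hi', rfl⟩)
  · obtain ⟨k, hk, hrk⟩ := exists_key u w0 hrep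
    have hkle : k ≤ keyOf w0 (itf u w0 t, j'') := Fkey_min u w0 hk _ hrk.symm
    refine ⟨rep u (itf u w0 t, j''), ?_, ?_⟩
    · rw [prev_char]
      exact ⟨k, hk, hrk, lt_of_le_of_lt hkle hklt⟩
    · have hne : j'' ≠ jtf u w0 t := by
        intro hc
        rw [hc, ← ktf_eq] at hklt
        exact absurd hklt (lt_irrefl _)
      have e : rep u (itf u w0 t, j'') - gfun u w0 t = Finsupp.single j'' 1 := by
        rw [gfun_eq_rep, rep_def, rep_def]
        exact tsub_rep hne
      exact le_of_eq e
  · have hnle : ¬ (gfun u w0 t ≤ u i') := not_ft_le hdeg hi'.le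
    obtain ⟨j₀, hj₀⟩ := exists_lt_of_not_le hnle
    obtain ⟨x, hxm, hxle⟩ := exists_minE (A := BS u) ⟨(i', j₀), rfl⟩
    obtain ⟨k, hk, hrk, hklt⟩ := divisor_key_lt hdeg hxm hi' hxle
    refine ⟨x, ?_, ?_⟩
    · rw [prev_char]; exact ⟨k, hk, hrk, hklt⟩
    · calc x - gfun u w0 t ≤ rep u (i', j₀) - gfun u w0 t := tsub_le_tsub_right hxle _
        _ ≤ u i' - gfun u w0 t := add_single_sub_le hj₀

lemma catch_lemma (t : Fin (Fkey u w0).card) {wz : Expo n}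
    (hw0eq : w0 (itf u w0 t) = wz) (h2 : 2 ≤ mdeg wz)
    (hw0j : wz (jtf u w0 t) = 0) (hmem : wz ∈ MinE (Vt u w0 t ∪ Wt u w0 t)) : False := by
  have hwne : wz ≠ 0 := by
    intro hc; rw [hc, mdeg_zero] at h2; omega
  obtain ⟨k, hkne⟩ := exists_apply_ne_zero hwne
  have hkj : k ≠ jtf u w0 t := by
    intro hc; rw [hc] at hkne; exact hkne hw0j
  have hsingle : Finsupp.single k 1 ≤ wz := Finsupp.single_le_iff.mpr (by omega)
  by_cases hfk : rep u (itf u w0 t, k) ∈ GmI u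
  · have hz' : Finsupp.single k 1 ∈ Vt u w0 t := by
      refine ⟨k, rfl, hfk, ?_⟩
      rw [ktf_eq]
      apply keyOf_lt_keyOf_of_bool
      · rw [hw0eq]; exact hkne
      · rw [hw0eq]; exact hw0j
    have := hmem.2 _ (Or.inl hz') hsingle
    have hm := mdeg_single k 1
    rw [this] at hm
    omega
  · obtain ⟨x, hxm, hxle⟩ := exists_minE (A := BS u) ⟨(itf u w0 t, k), rfl⟩
    have hxne : x ≠ rep u (itf u w0 t, k) := by
      intro hc; rw [← hc] at hfk; exact hfk hxm
    have hmlt : mdeg x < mdeg (rep u (itf u w0 t, k)) := mdeg_lt_of_le_of_ne hxle hxne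
    obtain ⟨kk, hkk, hrkk⟩ := exists_key u w0 hxm
    have hxr : x = rep u ((ofLex kk).1, (ofLex (ofLex kk).2).2) := hrkk.symm
    have hilt : (ofLex kk).1 < itf u w0 t := by
      by_contra hc
      push_neg at hc
      have h3 := hdeg _ _ hc
      rw [hxr, mdeg_rep] at hmlt
      rw [mdeg_rep] at hmlt
      omega
    have hz'W : u (ofLex kk).1 - gfun u w0 t ∈ Wt u w0 t := ⟨(ofLex kk).1, hilt, rfl⟩
    have hz'le : u (ofLex kk).1 - gfun u w0 t ≤ Finsupp.single k 1 := by
      have h4 : u (ofLex kk).1 ≤ rep u (itf u w0 t, k) := by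
        refine le_trans ?_ hxle
        rw [hxr, rep_def]; exact le_add_self
      calc u (ofLex kk).1 - gfun u w0 t ≤ rep u (itf u w0 t, k) - gfun u w0 t :=
            tsub_le_tsub_right h4 _
        _ = Finsupp.single k 1 := by
            rw [gfun_eq_rep, rep_def, rep_def]
            exact tsub_rep hkj
    have heq := hmem.2 _ (Or.inr hz'W) (hz'le.trans hsingle)
    have : mdeg wz ≤ 1 := by
      rw [← heq] at hsingle ⊢
      have := mdeg_mono hz'le
      rw [mdeg_single] at this
      omega
    omega

end LamAux
end PerT

noncomputable section Compare
namespace LamAux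
variable {n : ℕ}

def lamSet (S : Set (Expo n)) : ℕ := ∑ᶠ w ∈ MinE S, (mdeg w - 1)

lemma lamSet_eq_sum {S : Set (Expo n)} (h : (MinE S).Finite) :
    lamSet S = ∑ w ∈ h.toFinset, (mdeg w - 1) :=
  finsum_mem_eq_finite_toFinset_sum _ h

lemma lamSet_compare {W' V : Set (Expo n)} (hW' : W'.Finite) (j : Fin n)
    (hV : ∀ v ∈ V, ∃ k, v = Finsupp.single k 1) :
    lamSet (V ∪ (fun w => w - Finsupp.single j 1) '' W') ≤ lamSet W' ∧
      ∀ w₀ ∈ MinE W', 2 ≤ mdeg w₀ →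
        (w₀ j = 0 → w₀ ∉ MinE (V ∪ (fun w => w - Finsupp.single j 1) '' W')) →
        lamSet (V ∪ (fun w => w - Finsupp.single j 1) '' W') < lamSet W' := by
  classical
  set δ : Expo n → Expo n := fun w => w - Finsupp.single j 1 with hδ
  have hVfin : V.Finite := Set.Finite.subset
    (Set.finite_range fun k : Fin n => Finsupp.single k 1)
    (fun v hv => by obtain ⟨k, hk⟩ := hV v hv; exact ⟨k, hk.symm⟩)
  have hUfin : (V ∪ δ '' W').Finite := hVfin.union (hW'.image _)
  have hS : (MinE (V ∪ δ '' W')).Finite := hUfin.subset (MinE_subset _)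
  have hT : (MinE W').Finite := hW'.subset (MinE_subset _)
  have hPz : ∀ z ∈ MinE (V ∪ δ '' W'), 2 ≤ mdeg z → ∃ w', w' ∈ MinE W' ∧ δ w' = z := by
    intro z hz h2
    have hzW : z ∈ δ '' W' := by
      rcases hz.1 with hv | hw
      · obtain ⟨k, hk⟩ := hV z hv; rw [hk, mdeg_single] at h2; omega
      · exact hw
    obtain ⟨w, hw, hwz⟩ := hzW
    obtain ⟨w', hw', hle⟩ := exists_minE hw
    have h1 : δ w' ≤ z := by rw [← hwz]; exact tsub_le_tsub_right hle _
    exact ⟨w', hw', hz.2 _ (Or.inr ⟨w', hw'.1, rfl⟩) h1⟩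
  set φ : Expo n → Expo n :=
    fun z => if h : ∃ w', w' ∈ MinE W' ∧ δ w' = z then h.choose else 0 with hφ
  have hφspec : ∀ z ∈ MinE (V ∪ δ '' W'), 2 ≤ mdeg z → φ z ∈ MinE W' ∧ δ (φ z) = z := by
    intro z hz h2
    have hex := hPz z hz h2
    simp only [hφ, dif_pos hex]
    exact hex.choose_spec
  set S2 : Finset (Expo n) := hS.toFinset.filter (fun z => 2 ≤ mdeg z) with hS2
  have hmem2 : ∀ z ∈ S2, z ∈ MinE (V ∪ δ '' W') ∧ 2 ≤ mdeg z := by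
    intro z hz
    simp only [hS2, Finset.mem_filter, Set.Finite.mem_toFinset] at hz
    exact hz
  have hsum1 : lamSet (V ∪ δ '' W') = ∑ z ∈ S2, (mdeg z - 1) := by
    rw [lamSet_eq_sum hS]
    refine (Finset.sum_subset (Finset.filter_subset _ _) ?_).symm
    intro z hzS hz2
    have : ¬ 2 ≤ mdeg z := by
      intro h
      exact hz2 (Finset.mem_filter.mpr ⟨hzS, h⟩)
    omega
  have hinj : ∀ z ∈ S2, ∀ z' ∈ S2, φ z = φ z' → z = z' := by
    intro z hz z' hz' heq
    obtain ⟨h1, h2⟩ := hmem2 z hz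
    obtain ⟨h1', h2'⟩ := hmem2 z' hz'
    rw [← (hφspec z h1 h2).2, ← (hφspec z' h1' h2').2, heq]
  have hpt : ∀ z ∈ S2, mdeg z - 1 ≤ mdeg (φ z) - 1 := by
    intro z hz
    obtain ⟨h1, h2⟩ := hmem2 z hz
    have e := (hφspec z h1 h2).2
    have : mdeg z ≤ mdeg (φ z) := by
      conv_lhs => rw [← e]
      exact mdeg_mono tsub_le_self
    omega
  have himg : S2.image φ ⊆ hT.toFinset := by
    intro w hw
    obtain ⟨z, hz, rfl⟩ := Finset.mem_image.mp hw
    obtain ⟨h1, h2⟩ := hmem2 z hz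
    exact hT.mem_toFinset.mpr (hφspec z h1 h2).1
  have hsum3 : ∑ z ∈ S2, (mdeg (φ z) - 1) = ∑ w ∈ S2.image φ, (mdeg w - 1) :=
    (Finset.sum_image (f := fun w => mdeg w - 1) hinj).symm
  have hlam' : lamSet W' = ∑ w ∈ hT.toFinset, (mdeg w - 1) := lamSet_eq_sum hT
  constructor
  · rw [hsum1, hlam']
    calc ∑ z ∈ S2, (mdeg z - 1) ≤ ∑ z ∈ S2, (mdeg (φ z) - 1) := Finset.sum_le_sum hpt
      _ = ∑ w ∈ S2.image φ, (mdeg w - 1) := hsum3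
      _ ≤ ∑ w ∈ hT.toFinset, (mdeg w - 1) :=
          Finset.sum_le_sum_of_subset_of_nonneg himg (fun _ _ _ => Nat.zero_le _)
  · intro w₀ hw₀ h2 hcatch
    rw [hsum1, hlam']
    by_cases hin : w₀ ∈ S2.image φ
    · obtain ⟨z₀, hz₀, hz₀e⟩ := Finset.mem_image.mp hin
      obtain ⟨h1, h2'⟩ := hmem2 z₀ hz₀
      have e1 : δ (φ z₀) = z₀ := (hφspec z₀ h1 h2').2
      have ez : z₀ = δ w₀ := by rw [← e1, hz₀e]
      have hj : w₀ j ≠ 0 := by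
        intro hj0
        have hzw : z₀ = w₀ := by rw [ez, hδ]; exact tsub_single_eq_self hj0
        exact hcatch hj0 (hzw ▸ h1)
      have hmz : mdeg z₀ + 1 = mdeg w₀ := by rw [ez, hδ]; exact mdeg_tsub_single hj
      have hstrict : mdeg z₀ - 1 < mdeg (φ z₀) - 1 := by rw [hz₀e]; omega
      calc ∑ z ∈ S2, (mdeg z - 1) < ∑ z ∈ S2, (mdeg (φ z) - 1) :=
            Finset.sum_lt_sum hpt ⟨z₀, hz₀, hstrict⟩
        _ = ∑ w ∈ S2.image φ, (mdeg w - 1) := hsum3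
        _ ≤ ∑ w ∈ hT.toFinset, (mdeg w - 1) :=
            Finset.sum_le_sum_of_subset_of_nonneg himg (fun _ _ _ => Nat.zero_le _)
    · calc ∑ z ∈ S2, (mdeg z - 1) ≤ ∑ z ∈ S2, (mdeg (φ z) - 1) := Finset.sum_le_sum hpt
        _ = ∑ w ∈ S2.image φ, (mdeg w - 1) := hsum3
        _ < ∑ w ∈ hT.toFinset, (mdeg w - 1) := by
            refine Finset.sum_lt_sum_of_subset himg (hT.mem_toFinset.mpr hw₀) hin ?_
              (fun _ _ _ => Nat.zero_le _)
            omega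
end LamAux
end Compare

noncomputable section Bridge
open scoped Pointwise
namespace LamAux
variable {n : ℕ} {K : Type} [Field K] {r : ℕ}

lemma span_mon_mul_span_mon (A B : Set (Expo n)) :
    Ideal.span (mon n K '' A) * Ideal.span (mon n K '' B)
      = Ideal.span (mon n K '' Set.image2 (· + ·) A B) := by
  rw [Ideal.span_mul_span']
  congr 1
  rw [Set.image_image2]
  have h1 : (mon n K '' A) * (mon n K '' B) = Set.image2 (· * ·) (mon n K '' A) (mon n K '' B) :=
    rfl
  rw [h1, Set.image2_image_left, Set.image2_image_right]
  exact Set.image2_congr fun a _ b _ => mon_mul a b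

lemma image2_single_range (u : Fin r → Expo n) :
    Set.image2 (· + ·) (Set.range fun j : Fin n => Finsupp.single j 1) (Set.range u)
      = BS u := by
  ext x
  constructor
  · rintro ⟨a, ⟨j, rfl⟩, b, ⟨i, rfl⟩, rfl⟩
    exact ⟨(i, j), rfl⟩
  · rintro ⟨⟨i, j⟩, rfl⟩
    exact ⟨Finsupp.single j 1, ⟨j, rfl⟩, u i, ⟨i, rfl⟩, rfl⟩

lemma maxIdeal_eq_span_mon :
    maxIdeal n K = Ideal.span (mon n K '' Set.range fun j : Fin n => Finsupp.single j 1) := by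
  rw [maxIdeal]
  congr 1
  rw [← Set.range_comp]
  rfl

lemma I_eq_span_range {I : Ideal (MvPolynomial (Fin n) K)} {u : Fin r → Expo n}
    (hI : IsMonomialIdeal n K I) (hrange : Set.range u = MinGens n K I) :
    I = Ideal.span (mon n K '' Set.range u) := by
  obtain ⟨A, hA⟩ := hI
  rw [hA, span_minE]
  congr 1
  rw [hrange, hA, minGens_span_mon]

lemma mI_eq_span {I : Ideal (MvPolynomial (Fin n) K)} {u : Fin r → Expo n}
    (hI : IsMonomialIdeal n K I) (hrange : Set.range u = MinGens n K I) :
    maxIdeal n K * I = Ideal.span (mon n K '' BS u) := by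
  rw [I_eq_span_range hI hrange, maxIdeal_eq_span_mon, span_mon_mul_span_mon,
    image2_single_range]

lemma minGens_mI {I : Ideal (MvPolynomial (Fin n) K)} {u : Fin r → Expo n}
    (hI : IsMonomialIdeal n K I) (hrange : Set.range u = MinGens n K I) :
    MinGens n K (maxIdeal n K * I) = GmI u := by
  rw [mI_eq_span hI hrange, minGens_span_mon]; rfl

lemma lamOrd_eq_lamSet {q : ℕ} (v : Fin q → Expo n) (i : Fin q) (S : Set (Expo n))
    (h : colonPrev n K v i = Ideal.span (mon n K '' S)) :
    lamOrd n K v i = lamSet S := by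
  rw [lamOrd, h, minGens_span_mon]; rfl

lemma colonPrev_u_eq (u : Fin r → Expo n) (i : Fin r) :
    colonPrev n K u i = Ideal.span (mon n K '' Wset u i) := by
  rw [colonPrev, colon_span_mon]
  congr 1
  simp only [Set.image_image]
  rw [Wset]
  simp only [Set.image_image]

lemma colonPrev_g_eq {u w0 : Fin r → Expo n} (hdeg : DegIncr u)
    (t : Fin (Fkey u w0).card) :
    colonPrev n K (gfun u w0) t = Ideal.span (mon n K '' (Vt u w0 t ∪ Wt u w0 t)) := by
  rw [colonPrev, colon_span_mon]
  apply span_mon_congr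
  · rintro a ⟨x, hx, rfl⟩
    exact prev_dominated hdeg t x hx
  · intro y hy
    obtain ⟨x, hx, hxy⟩ := dominating_prev hdeg t y hy
    exact ⟨x - gfun u w0 t, ⟨x, hx, rfl⟩, hxy⟩

end LamAux
end Bridge

noncomputable section Assemble
namespace LamAux
variable {n r : ℕ}

open scoped Classical in
def w0def (u : Fin r → Expo n) : Fin r → Expo n := fun i =>
  if h : ∃ w, w ∈ MinE (Wset u i) ∧ 2 ≤ mdeg w then h.choose else 0

lemma w0def_spec {u : Fin r → Expo n} {i : Fin r}
    (h : ∃ w, w ∈ MinE (Wset u i) ∧ 2 ≤ mdeg w) :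
    w0def u i ∈ MinE (Wset u i) ∧ 2 ≤ mdeg (w0def u i) := by
  classical
  rw [w0def]
  rw [dif_pos h]
  exact h.choose_spec

lemma exists_heavy {S : Set (Expo n)} (hfin : (MinE S).Finite) (hpos : 0 < lamSet S) :
    ∃ w, w ∈ MinE S ∧ 2 ≤ mdeg w := by
  rw [lamSet_eq_sum hfin] at hpos
  by_contra hc
  push_neg at hc
  have hz : ∀ w ∈ hfin.toFinset, mdeg w - 1 = 0 := by
    intro w hw
    have := hc w (hfin.mem_toFinset.mp hw)
    omega
  rw [Finset.sum_eq_zero hz] at hpos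
  omega

lemma lamSet_zero_mdeg {S : Set (Expo n)} (hfin : (MinE S).Finite) (h0 : lamSet S = 0) :
    ∀ z ∈ MinE S, mdeg z ≤ 1 := by
  rw [lamSet_eq_sum hfin] at h0
  intro z hz
  have := (Finset.sum_eq_zero_iff).mp h0 z (hfin.mem_toFinset.mpr hz)
  omega

lemma wset_finite (u : Fin r → Expo n) (i : Fin r) : (Wset u i).Finite :=
  (Set.toFinite _).image _

lemma vt_finite (u w0 : Fin r → Expo n) (t) : (Vt u w0 t).Finite := by
  apply Set.Finite.subset (Set.finite_range fun k : Fin n => Finsupp.single k 1)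
  rintro v ⟨j'', rfl, _, _⟩
  exact ⟨j'', rfl⟩

end LamAux
end Assemble

/-- **(Ficarra–Herzog–Moradi, proof of Theorem 1.5).** Let `I` be a monomial ideal and
`O : u_1 < ⋯ < u_r` a degree-increasing order on `G(I)`. Then there is an order `O_1`
on the minimal monomial generators of `mI`, each of which is of the form `x_j u_i`,
such that for every `f = x_j u_i ∈ G(mI)`: `λ_{mI,O_1,f} ≤ λ_{I,O,u_i}`, and if
`λ_{I,O,u_i} > 0` then `λ_{mI,O_1,f} < λ_{I,O,u_i}`. In particular, if `I` has linear
quotients with respect to `O`, then `mI` has linear quotients with respect to `O_1`. -/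
theorem lambda_decreases_for_mI (n : ℕ) (K : Type) [Field K]
    (I : Ideal (MvPolynomial (Fin n) K)) (hI : IsMonomialIdeal n K I)
    (r : ℕ) (u : Fin r → Expo n) (hinj : Function.Injective u)
    (hrange : Set.range u = MinGens n K I) (hdeg : DegIncr u) :
    ∃ (m : ℕ) (g : Fin m → Expo n), Function.Injective g ∧
      Set.range g = MinGens n K (maxIdeal n K * I) ∧
      (∀ t : Fin m, ∃ (i : Fin r) (j : Fin n),
        g t = u i + Finsupp.single j 1 ∧
        lamOrd n K g t ≤ lamOrd n K u i ∧
        (0 < lamOrd n K u i → lamOrd n K g t < lamOrd n K u i)) ∧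
      ((∀ i : Fin r, lamOrd n K u i = 0) →
        ∀ t : Fin m, genByVars n K (colonPrev n K g t)) := by
  classical
  open LamAux in
  set w0 := LamAux.w0def u with hw0
  have hVshape : ∀ t, ∀ v ∈ LamAux.Vt u w0 t, ∃ k, v = Finsupp.single k 1 := by
    rintro t v ⟨j'', rfl, _, _⟩
    exact ⟨j'', rfl⟩
  have hlamu : ∀ i : Fin r, lamOrd n K u i = LamAux.lamSet (LamAux.Wset u i) :=
    fun i => LamAux.lamOrd_eq_lamSet u i _ (LamAux.colonPrev_u_eq u i)
  have hlamg : ∀ t, lamOrd n K (LamAux.gfun u w0) t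
      = LamAux.lamSet (LamAux.Vt u w0 t ∪ LamAux.Wt u w0 t) :=
    fun t => LamAux.lamOrd_eq_lamSet _ t _ (LamAux.colonPrev_g_eq hdeg t)
  have hunion : ∀ t, LamAux.Vt u w0 t ∪ LamAux.Wt u w0 t
      = LamAux.Vt u w0 t ∪
        (fun w => w - Finsupp.single (LamAux.jtf u w0 t) 1) '' LamAux.Wset u (LamAux.itf u w0 t) := by
    intro t
    rw [LamAux.Wt_eq]
  have hle : ∀ t, lamOrd n K (LamAux.gfun u w0) t ≤ lamOrd n K u (LamAux.itf u w0 t) := by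
    intro t
    rw [hlamg, hlamu, hunion]
    exact (LamAux.lamSet_compare (LamAux.wset_finite u _) _ (hVshape t)).1
  refine ⟨(LamAux.Fkey u w0).card, LamAux.gfun u w0, LamAux.gfun_inj u w0, ?_, ?_, ?_⟩
  · rw [LamAux.range_gfun, LamAux.minGens_mI hI hrange]
  · intro t
    refine ⟨LamAux.itf u w0 t, LamAux.jtf u w0 t, ?_, hle t, ?_⟩
    · rw [LamAux.gfun_eq_rep, LamAux.rep_def, add_comm]
    · intro hpos
      rw [hlamu] at hpos
      have hfinT : (LamAux.MinE (LamAux.Wset u (LamAux.itf u w0 t))).Finite :=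
        (LamAux.wset_finite u _).subset (LamAux.MinE_subset _)
      have hex := LamAux.exists_heavy hfinT hpos
      have hspec := LamAux.w0def_spec hex
      rw [hlamg, hlamu, hunion]
      refine (LamAux.lamSet_compare (LamAux.wset_finite u _) _ (hVshape t)).2
        (w0 (LamAux.itf u w0 t)) hspec.1 hspec.2 ?_
      intro hj0 hmem
      rw [← hunion] at hmem
      exact absurd (LamAux.catch_lemma hdeg t rfl hspec.2 hj0 hmem) (fun h => h)
  · intro hall t
    have h0 : LamAux.lamSet (LamAux.Vt u w0 t ∪ LamAux.Wt u w0 t) = 0 := by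
      have h1 := hle t
      rw [hlamg, hall] at h1
      omega
    have hfinU : (LamAux.Vt u w0 t ∪ LamAux.Wt u w0 t).Finite :=
      (LamAux.vt_finite u w0 t).union ((Set.toFinite _).image _)
    have hfinM : (LamAux.MinE (LamAux.Vt u w0 t ∪ LamAux.Wt u w0 t)).Finite :=
      hfinU.subset (LamAux.MinE_subset _)
    have hshape : ∀ z ∈ LamAux.MinE (LamAux.Vt u w0 t ∪ LamAux.Wt u w0 t),
        ∃ k, z = Finsupp.single k 1 := by
      intro z hz
      rcases hz.1 with hv | hw
      · exact hVshape t z hv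
      · obtain ⟨i', hi', rfl⟩ := hw
        have hne := LamAux.wt_ne_zero hdeg hi'
        have h1 := LamAux.lamSet_zero_mdeg hfinM h0 _ hz
        have h2 := LamAux.mdeg_pos_of_ne_zero hne
        exact LamAux.mdeg_eq_one (le_antisymm h1 h2)
    refine ⟨{k | Finsupp.single k 1 ∈ LamAux.MinE (LamAux.Vt u w0 t ∪ LamAux.Wt u w0 t)}, ?_⟩
    rw [LamAux.colonPrev_g_eq hdeg t, LamAux.span_minE]
    congr 1
    ext q
    constructor
    · rintro ⟨z, hz, rfl⟩
      obtain ⟨k, rfl⟩ := hshape z hz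
      exact ⟨k, hz, rfl⟩
    · rintro ⟨k, hk, rfl⟩
      exact ⟨Finsupp.single k 1, hk, rfl⟩
end

section
/- Let I ⊂ S = K[x_1,…,x_n] be a monomial ideal and m = (x_1,…,x_n). If m^t I has linear quotients with respect to a degree-increasing admissible order on G(m^t I) for some t ≥ 0, then m^k I has linear quotients for all k ≥ t. -/
/-! # Framework: monomial ideals in `S = K[x_1,…,x_n]`

Monomials are encoded by their exponent vectors in `Fin n →₀ ℕ`; divisibility of
monomials corresponds to the pointwise order, and `u : v = u / gcd(u,v)` corresponds
to truncated subtraction of exponent vectors. -/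

open MvPolynomial

noncomputable section LQAux

namespace LQ

open Finsupp

variable {n : ℕ} {K : Type} [Field K]

/-! ### Basic monomial lemmas -/

lemma mon_mul (a b : Expo n) : mon n K a * mon n K b = mon n K (a + b) := by
  simp [mon, monomial_mul]

lemma X_eq_mon (j : Fin n) : (X j : MvPolynomial (Fin n) K) = mon n K (Finsupp.single j 1) := rfl

lemma support_mon (s : Expo n) : (mon n K s).support = {s} := by
  classical
  rw [mon, MvPolynomial.support_monomial, if_neg one_ne_zero]

lemma mem_span_mon {A : Set (Expo n)} {f : MvPolynomial (Fin n) K} :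
    f ∈ Ideal.span (mon n K '' A) ↔ ∀ m ∈ f.support, ∃ a ∈ A, a ≤ m :=
  MvPolynomial.mem_ideal_span_monomial_image

lemma mon_mem_span_mon {A : Set (Expo n)} {s : Expo n} :
    mon n K s ∈ Ideal.span (mon n K '' A) ↔ ∃ a ∈ A, a ≤ s := by
  rw [mem_span_mon]
  constructor
  · intro h
    exact h s (by rw [support_mon]; exact Finset.mem_singleton_self s)
  · rintro ⟨a, ha, hle⟩ m hm
    rw [support_mon, Finset.mem_singleton] at hm
    subst hm
    exact ⟨a, ha, hle⟩

/-! ### Degree lemmas -/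

lemma mdeg_add (a b : Expo n) : mdeg (a + b) = mdeg a + mdeg b := by
  rw [mdeg, mdeg, mdeg, Finsupp.sum_add_index' (fun _ => rfl) (fun _ _ _ => rfl)]

lemma mdeg_single (j : Fin n) : mdeg (Finsupp.single j 1) = 1 := by
  simp [mdeg, Finsupp.sum_single_index]

lemma mdeg_eq_zero {s : Expo n} (h : mdeg s = 0) : s = 0 := by
  ext i
  simp only [Finsupp.coe_zero, Pi.zero_apply]
  by_contra hi
  have hmem : i ∈ s.support := Finsupp.mem_support_iff.2 hi
  rw [mdeg, Finsupp.sum] at h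
  exact hi (Finset.sum_eq_zero_iff.mp h i hmem)

lemma mdeg_lt {a b : Expo n} (hle : a ≤ b) (hne : a ≠ b) : mdeg a < mdeg b := by
  have h1 : a + (b - a) = b := add_tsub_cancel_of_le hle
  have h2 : b - a ≠ 0 := by
    intro h0; apply hne; rw [h0, add_zero] at h1; exact h1
  have h3 : mdeg (b - a) ≠ 0 := fun hz => h2 (mdeg_eq_zero hz)
  calc mdeg a < mdeg a + mdeg (b - a) := by omega
  _ = mdeg b := by rw [← mdeg_add, h1]

lemma mdeg_mono {a b : Expo n} (hle : a ≤ b) : mdeg a ≤ mdeg b := by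
  rcases eq_or_ne a b with rfl | hne
  · exact le_rfl
  · exact (mdeg_lt hle hne).le

lemma eq_of_le_of_mdeg_ge {a b : Expo n} (hle : a ≤ b) (hdeg : mdeg b ≤ mdeg a) : a = b := by
  by_contra hne
  exact absurd (mdeg_lt hle hne) (by omega)

/-! ### Finsupp arithmetic lemmas -/

lemma exists_single_add_le {a b : Expo n} (hle : a ≤ b) (hne : a ≠ b) :
    ∃ s, Finsupp.single s 1 + a ≤ b := by
  have h1 : a + (b - a) = b := add_tsub_cancel_of_le hle
  have h2 : b - a ≠ 0 := by
    intro h0; apply hne; rw [h0, add_zero] at h1; exact h1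
  obtain ⟨s, hs⟩ := Finsupp.support_nonempty_iff.mpr h2
  refine ⟨s, Finsupp.le_def.mpr fun i => ?_⟩
  have hba := Finsupp.tsub_apply b a i
  have hlei := Finsupp.le_def.mp hle i
  rcases eq_or_ne i s with rfl | hi
  · have h4 : 1 ≤ (b - a) i := Nat.one_le_iff_ne_zero.mpr (Finsupp.mem_support_iff.mp hs)
    rw [Finsupp.add_apply, Finsupp.single_eq_same]
    omega
  · rw [Finsupp.add_apply, Finsupp.single_eq_of_ne' (Ne.symm hi), zero_add]
    exact hlei

lemma eq_zero_or_single_of_le {c : Expo n} {j : Fin n} (h : c ≤ Finsupp.single j 1) :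
    c = 0 ∨ c = Finsupp.single j 1 := by
  rcases Nat.eq_zero_or_pos (c j) with h0 | h1
  · left
    ext i
    simp only [Finsupp.coe_zero, Pi.zero_apply]
    have hi := Finsupp.le_def.mp h i
    rcases eq_or_ne i j with rfl | hij
    · exact h0
    · rwa [Finsupp.single_eq_of_ne' (Ne.symm hij), Nat.le_zero] at hi
  · right
    ext i
    have hi := Finsupp.le_def.mp h i
    rcases eq_or_ne i j with rfl | hij
    · rw [Finsupp.single_eq_same] at hi ⊢
      omega
    · rw [Finsupp.single_eq_of_ne' (Ne.symm hij)] at hi ⊢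
      omega

lemma add_tsub_add' (a b c : Expo n) : (a + c) - (b + c) = a - b := by
  ext i
  rw [Finsupp.tsub_apply, Finsupp.tsub_apply, Finsupp.add_apply, Finsupp.add_apply]
  omega

lemma single_tsub_single {j' j : Fin n} (h : j' ≠ j) :
    (Finsupp.single j' 1 : Expo n) - Finsupp.single j 1 = Finsupp.single j' 1 := by
  ext i
  rw [Finsupp.tsub_apply]
  rcases eq_or_ne i j' with rfl | hi
  · rw [Finsupp.single_eq_same, Finsupp.single_eq_of_ne' (Ne.symm h)]
    omega
  · rw [Finsupp.single_eq_of_ne' (Ne.symm hi)]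
    omega

/-! ### Colon and span lemmas -/

lemma colon_le {B : Set (Expo n)} {v : Expo n} :
    Submodule.colon (Ideal.span (mon n K '' B)) (Ideal.span {mon n K v}) ≤
      Ideal.span (mon n K '' ((fun b => b - v) '' B)) := by
  intro f hf
  have hfv : f * mon n K v ∈ Ideal.span (mon n K '' B) := Submodule.mem_colon_span_singleton.mp hf
  rw [mem_span_mon] at hfv
  rw [mem_span_mon]
  intro m hm
  have hmv : m + v ∈ (f * mon n K v).support := by
    rw [MvPolynomial.mem_support_iff, mon, MvPolynomial.coeff_mul_monomial, mul_one]
    exact MvPolynomial.mem_support_iff.mp hm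
  obtain ⟨b, hb, hble⟩ := hfv _ hmv
  exact ⟨b - v, ⟨b, hb, rfl⟩, tsub_le_iff_right.mpr hble⟩

lemma maxIdeal_mul_span (B : Set (Expo n)) :
    maxIdeal n K * Ideal.span (mon n K '' B) =
      Ideal.span (mon n K '' {w | ∃ j b, b ∈ B ∧ w = Finsupp.single j 1 + b}) := by
  rw [maxIdeal, Ideal.span_mul_span']
  congr 1
  ext f
  simp only [Set.mem_mul, Set.mem_image, Set.mem_range, Set.mem_setOf_eq]
  constructor
  · rintro ⟨x, ⟨j, rfl⟩, y, ⟨b, hb, rfl⟩, rfl⟩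
    exact ⟨Finsupp.single j 1 + b, ⟨j, b, hb, rfl⟩, by rw [X_eq_mon, mon_mul]⟩
  · rintro ⟨w, ⟨j, b, hb, rfl⟩, rfl⟩
    exact ⟨X j, ⟨j, rfl⟩, mon n K b, ⟨b, hb, rfl⟩, by rw [X_eq_mon, mon_mul]⟩

lemma isMonomialIdeal_maxIdeal_mul {J : Ideal (MvPolynomial (Fin n) K)}
    (hJ : IsMonomialIdeal n K J) : IsMonomialIdeal n K (maxIdeal n K * J) := by
  obtain ⟨A, rfl⟩ := hJ
  exact ⟨_, maxIdeal_mul_span A⟩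

/-! ### Minimal generators -/

lemma exists_minGen (J : Ideal (MvPolynomial (Fin n) K)) :
    ∀ (d : ℕ) (s : Expo n), mdeg s ≤ d → mon n K s ∈ J → ∃ g ∈ MinGens n K J, g ≤ s := by
  intro d
  induction d with
  | zero =>
    intro s hd hs
    refine ⟨s, ⟨hs, fun t _ hts => ?_⟩, le_rfl⟩
    have hs0 : s = 0 := mdeg_eq_zero (Nat.le_zero.mp hd)
    subst hs0
    exact le_antisymm hts bot_le
  | succ d ih =>
    intro s hd hs
    by_cases hmin : ∀ t, mon n K t ∈ J → t ≤ s → t = s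
    · exact ⟨s, ⟨hs, hmin⟩, le_rfl⟩
    · push_neg at hmin
      obtain ⟨t, htJ, hts, htne⟩ := hmin
      have hlt : mdeg t < mdeg s := mdeg_lt hts htne
      obtain ⟨g, hg, hgt⟩ := ih t (by omega) htJ
      exact ⟨g, hg, hgt.trans hts⟩

lemma span_minGens {J : Ideal (MvPolynomial (Fin n) K)} (hJ : IsMonomialIdeal n K J) :
    J = Ideal.span (mon n K '' MinGens n K J) := by
  obtain ⟨A, rfl⟩ := hJ
  apply le_antisymm
  · rw [Ideal.span_le]
    rintro _ ⟨a, ha, rfl⟩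
    obtain ⟨g, hg, hga⟩ :=
      exists_minGen (Ideal.span (mon n K '' A)) (mdeg a) a le_rfl
        (Ideal.subset_span (Set.mem_image_of_mem _ ha))
    exact SetLike.mem_coe.mpr (mon_mem_span_mon.mpr ⟨g, hg, hga⟩)
  · rw [Ideal.span_le]
    rintro _ ⟨g, hg, rfl⟩
    exact SetLike.mem_coe.mpr hg.1

/-! ### Base-n arithmetic -/

lemma base_le {N a b c d : ℕ} (hb : b < N) (hd : d < N) (h : a * N + b ≤ c * N + d) :
    a ≤ c := by
  by_contra hgt
  push_neg at hgt
  have h2 : c * N + N ≤ a * N := by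
    have := Nat.mul_le_mul_right N (Nat.succ_le_of_lt hgt)
    calc c * N + N = (c + 1) * N := by ring
    _ ≤ a * N := by simpa [Nat.succ_mul] using this
  linarith

lemma base_inj {N a b c d : ℕ} (hb : b < N) (hd : d < N) (h : a * N + b = c * N + d) :
    a = c ∧ b = d := by
  have h1 : a = c := le_antisymm (base_le hb hd h.le) (base_le hd hb h.ge)
  subst h1
  exact ⟨rfl, Nat.add_left_cancel h⟩

/-! ### The key function for the new order -/

open scoped Classical in
/-- The set of indices `i` such that `w = x_j · u_i` for some variable `x_j`. -/
noncomputable def repFinset {r : ℕ} (u : Fin r → Expo n) (w : Expo n) : Finset (Fin r) :=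
  Finset.univ.filter fun i => ∃ j : Fin n, w = Finsupp.single j 1 + u i

variable {r : ℕ} {u : Fin r → Expo n}

noncomputable def iIdx {w : Expo n} (h : (repFinset u w).Nonempty) : Fin r :=
  (repFinset u w).min' h

noncomputable def jIdx {w : Expo n} (h : (repFinset u w).Nonempty) : Fin n :=
  Classical.choose ((Finset.mem_filter.mp ((repFinset u w).min'_mem h)).2)

lemma rep_spec {w : Expo n} (h : (repFinset u w).Nonempty) :
    w = Finsupp.single (jIdx h) 1 + u (iIdx h) :=
  Classical.choose_spec ((Finset.mem_filter.mp ((repFinset u w).min'_mem h)).2)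

lemma iIdx_min {w : Expo n} (h : (repFinset u w).Nonempty) {i : Fin r} (j : Fin n)
    (hw : w = Finsupp.single j 1 + u i) : iIdx h ≤ i := by
  classical
  exact Finset.min'_le _ _ (Finset.mem_filter.mpr ⟨Finset.mem_univ _, j, hw⟩)

noncomputable def key (u : Fin r → Expo n) (w : Expo n) : ℕ :=
  if h : (repFinset u w).Nonempty then (iIdx h : ℕ) * n + (jIdx h : ℕ) else 0

lemma key_eq {w : Expo n} (h : (repFinset u w).Nonempty) :
    key u w = (iIdx h : ℕ) * n + (jIdx h : ℕ) := dif_pos h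

lemma mdeg_rep {w : Expo n} (h : (repFinset u w).Nonempty) :
    mdeg w = mdeg (u (iIdx h)) + 1 := by
  conv_lhs => rw [rep_spec h]
  rw [mdeg_add, mdeg_single]
  omega

lemma key_inj {w w' : Expo n} (h : (repFinset u w).Nonempty) (h' : (repFinset u w').Nonempty)
    (hk : key u w = key u w') : w = w' := by
  rw [key_eq h, key_eq h'] at hk
  obtain ⟨hi, hj⟩ := base_inj (jIdx h).isLt (jIdx h').isLt hk
  rw [rep_spec h, rep_spec h']
  rw [Fin.val_eq_val] at hi hj
  rw [hi, hj]

/-! ### Main development, under the standing hypotheses -/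

variable {J : Ideal (MvPolynomial (Fin n) K)}

lemma J_span (hJ : IsMonomialIdeal n K J) (hu : IsLinQuotOrder n K J u) :
    J = Ideal.span (mon n K '' Set.range u) := by
  rw [hu.2.1]
  exact span_minGens hJ

lemma mJ_span (hJ : IsMonomialIdeal n K J) (hu : IsLinQuotOrder n K J u) :
    maxIdeal n K * J =
      Ideal.span (mon n K '' {w | ∃ (j : Fin n) (i : Fin r), w = Finsupp.single j 1 + u i}) := by
  have hset : {w | ∃ (j : Fin n) (b : Expo n), b ∈ Set.range u ∧ w = Finsupp.single j 1 + b} =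
      {w | ∃ (j : Fin n) (i : Fin r), w = Finsupp.single j 1 + u i} := by
    ext w
    constructor
    · rintro ⟨j, b, ⟨i, rfl⟩, rfl⟩
      exact ⟨j, i, rfl⟩
    · rintro ⟨j, i, rfl⟩
      exact ⟨j, u i, ⟨i, rfl⟩, rfl⟩
  rw [J_span hJ hu, maxIdeal_mul_span, hset]

lemma mon_mem_mJ (hJ : IsMonomialIdeal n K J) (hu : IsLinQuotOrder n K J u) {s : Expo n} :
    mon n K s ∈ maxIdeal n K * J ↔
      ∃ (j : Fin n) (i : Fin r), Finsupp.single j 1 + u i ≤ s := by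
  rw [mJ_span hJ hu, mon_mem_span_mon]
  constructor
  · rintro ⟨a, ⟨j, i, rfl⟩, hle⟩
    exact ⟨j, i, hle⟩
  · rintro ⟨j, i, hle⟩
    exact ⟨_, ⟨j, i, rfl⟩, hle⟩

lemma minGens_rep (hJ : IsMonomialIdeal n K J) (hu : IsLinQuotOrder n K J u) {w : Expo n}
    (hw : w ∈ MinGens n K (maxIdeal n K * J)) : (repFinset u w).Nonempty := by
  classical
  obtain ⟨j, i, hle⟩ := (mon_mem_mJ hJ hu).mp hw.1
  have hmem : mon n K (Finsupp.single j 1 + u i) ∈ maxIdeal n K * J :=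
    (mon_mem_mJ hJ hu).mpr ⟨j, i, le_rfl⟩
  have heq : Finsupp.single j 1 + u i = w := hw.2 _ hmem hle
  exact ⟨i, Finset.mem_filter.mpr ⟨Finset.mem_univ _, j, heq.symm⟩⟩

lemma mem_colonPrev {i : Fin r} {f : MvPolynomial (Fin n) K} :
    f ∈ colonPrev n K u i ↔
      f * mon n K (u i) ∈ Ideal.span (mon n K '' (u '' {l : Fin r | l < i})) := by
  unfold colonPrev
  exact Submodule.mem_colon_span_singleton

lemma not_colon_var (hJ : IsMonomialIdeal n K J) (hu : IsLinQuotOrder n K J u)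
    (hd : DegIncr u) {w : Expo n} (hw : w ∈ MinGens n K (maxIdeal n K * J))
    (h : (repFinset u w).Nonempty) :
    (X (jIdx h) : MvPolynomial (Fin n) K) ∉ colonPrev n K u (iIdx h) := by
  intro hmem
  have h1 : mon n K w ∈ Ideal.span (mon n K '' (u '' {l | l < iIdx h})) := by
    have h2 := mem_colonPrev.mp hmem
    rwa [X_eq_mon, mon_mul, ← rep_spec h] at h2
  obtain ⟨a, ⟨l, hl, rfl⟩, hle⟩ := mon_mem_span_mon.mp h1
  have hne : u l ≠ w := by
    intro he
    have hwJ : w ∈ MinGens n K J := by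
      rw [← hu.2.1]; exact ⟨l, he⟩
    have hui : mon n K (u (iIdx h)) ∈ J := by
      have hmem2 : u (iIdx h) ∈ MinGens n K J := by
        rw [← hu.2.1]; exact ⟨iIdx h, rfl⟩
      exact hmem2.1
    have hle2 : u (iIdx h) ≤ w :=
      calc u (iIdx h) ≤ Finsupp.single (jIdx h) 1 + u (iIdx h) := le_add_self
      _ = w := (rep_spec h).symm
    have heq := hwJ.2 (u (iIdx h)) hui hle2
    have hdeg := mdeg_rep h
    rw [heq] at hdeg
    omega
  obtain ⟨s, hs⟩ := exists_single_add_le hle hne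
  have hmem2 : mon n K (Finsupp.single s 1 + u l) ∈ maxIdeal n K * J :=
    (mon_mem_mJ hJ hu).mpr ⟨s, l, le_rfl⟩
  have heq : Finsupp.single s 1 + u l = w := hw.2 _ hmem2 hs
  have hge : iIdx h ≤ l := iIdx_min h s heq.symm
  exact absurd hl (not_lt.mpr hge)

lemma colon_var_of_lt (hu : IsLinQuotOrder n K J u) {i' i : Fin r} (hlt : i' < i) :
    ∃ p : Fin n, (X p : MvPolynomial (Fin n) K) ∈ colonPrev n K u i ∧
      Finsupp.single p 1 ≤ u i' - u i := by
  have h1 : mon n K (u i' - u i) ∈ colonPrev n K u i := by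
    apply mem_colonPrev.mpr
    rw [mon_mul]
    exact mon_mem_span_mon.mpr ⟨u i', ⟨i', hlt, rfl⟩, le_tsub_add⟩
  obtain ⟨T, hT⟩ := hu.2.2 i
  rw [hT] at h1
  have h2 : (fun p => (X p : MvPolynomial (Fin n) K)) '' T =
      mon n K '' ((fun p => Finsupp.single p 1) '' T) := by
    rw [Set.image_image]; rfl
  rw [h2] at h1
  obtain ⟨a, ⟨p, hp, rfl⟩, hle⟩ := mon_mem_span_mon.mp h1
  refine ⟨p, ?_, hle⟩
  rw [hT]
  exact Ideal.subset_span ⟨p, hp, rfl⟩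

lemma v_mem (hJ : IsMonomialIdeal n K J) (hu : IsLinQuotOrder n K J u) (hd : DegIncr u)
    {i : Fin r} {p : Fin n} (hp : (X p : MvPolynomial (Fin n) K) ∈ colonPrev n K u i) :
    mon n K (Finsupp.single p 1 + u i) ∈ maxIdeal n K * J := by
  have h1 : mon n K (Finsupp.single p 1 + u i) ∈
      Ideal.span (mon n K '' (u '' {l | l < i})) := by
    have h2 := mem_colonPrev.mp hp
    rwa [X_eq_mon, mon_mul] at h2
  obtain ⟨a, ⟨l, hl, rfl⟩, hle⟩ := mon_mem_span_mon.mp h1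
  have hdeg : mdeg (u l) < mdeg (Finsupp.single p 1 + u i) := by
    have h3 := hd l i (le_of_lt hl)
    rw [mdeg_add, mdeg_single]
    omega
  have hne : u l ≠ Finsupp.single p 1 + u i := by
    intro he; rw [he] at hdeg; exact lt_irrefl _ hdeg
  obtain ⟨s, hs⟩ := exists_single_add_le hle hne
  exact (mon_mem_mJ hJ hu).mpr ⟨s, l, hs⟩

lemma main_witness (hJ : IsMonomialIdeal n K J) (hu : IsLinQuotOrder n K J u)
    (hd : DegIncr u) {w' w : Expo n}
    (hw' : w' ∈ MinGens n K (maxIdeal n K * J)) (hw : w ∈ MinGens n K (maxIdeal n K * J))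
    (hlt : key u w' < key u w) :
    ∃ (p : Fin n) (w'' : Expo n), w'' ∈ MinGens n K (maxIdeal n K * J) ∧
      key u w'' < key u w ∧ w'' - w = Finsupp.single p 1 ∧
      Finsupp.single p 1 ≤ w' - w := by
  have h' := minGens_rep hJ hu hw'
  have h := minGens_rep hJ hu hw
  have hltk := hlt
  rw [key_eq h', key_eq h] at hltk
  have hj'n := (jIdx h').isLt
  have hjn := (jIdx h).isLt
  have hii : iIdx h' ≤ iIdx h := by
    rw [Fin.le_def]
    exact base_le hj'n hjn hltk.le
  rcases eq_or_lt_of_le hii with heq | hlt2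
  · -- same minimal index, so j' < j
    have hjne : jIdx h' ≠ jIdx h := by
      intro he
      rw [heq, he] at hltk
      exact lt_irrefl _ hltk
    have e' := rep_spec h'
    rw [heq] at e'
    have hsub : w' - w = Finsupp.single (jIdx h') 1 := by
      refine (congrArg₂ (fun a b => a - b) e' (rep_spec h)).trans ?_
      rw [add_tsub_add']
      exact single_tsub_single hjne
    exact ⟨jIdx h', w', hw', hlt, hsub, hsub.ge⟩
  · -- i' < i
    obtain ⟨p, hpc, hple⟩ := colon_var_of_lt hu hlt2
    have hpj : p ≠ jIdx h := by
      intro he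
      exact not_colon_var hJ hu hd hw h (he ▸ hpc)
    set v := Finsupp.single p 1 + u (iIdx h) with hv
    have hvmem := v_mem hJ hu hd hpc
    obtain ⟨w'', hw'', hwv⟩ := exists_minGen _ (mdeg v) v le_rfl hvmem
    have hvw : v - w = Finsupp.single p 1 := by
      refine (congrArg₂ (fun a b => a - b) hv (rep_spec h)).trans ?_
      rw [add_tsub_add']
      exact single_tsub_single hpj
    have hsub1 : w'' - w ≤ Finsupp.single p 1 := hvw ▸ tsub_le_tsub_right hwv w
    have hwj : w (jIdx h) = u (iIdx h) (jIdx h) + 1 := by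
      have e := DFunLike.congr_fun (rep_spec h) (jIdx h)
      rw [Finsupp.add_apply, Finsupp.single_eq_same] at e
      omega
    have hvj : v (jIdx h) = u (iIdx h) (jIdx h) := by
      rw [hv, Finsupp.add_apply, Finsupp.single_eq_of_ne' hpj, zero_add]
    have hne0 : w'' - w ≠ 0 := by
      intro h0
      have hlew : w'' ≤ w := tsub_eq_zero_iff_le.mp h0
      have heqw : w'' = w := hw.2 w'' hw''.1 hlew
      subst heqw
      have h1 := Finsupp.le_def.mp hwv (jIdx h)
      omega
    have hsub : w'' - w = Finsupp.single p 1 := by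
      rcases eq_zero_or_single_of_le hsub1 with h0 | h1
      · exact absurd h0 hne0
      · exact h1
    have h'' := minGens_rep hJ hu hw''
    have hdegv : mdeg v = mdeg (u (iIdx h)) + 1 := by
      rw [hv, mdeg_add, mdeg_single]; omega
    have hdw'' := mdeg_rep h''
    have hi'' : iIdx h'' < iIdx h := by
      have hdv : mdeg w'' ≤ mdeg v := mdeg_mono hwv
      rcases lt_or_eq_of_le hdv with hlt3 | heq3
      · by_contra hge
        push_neg at hge
        have h4 := hd _ _ hge
        omega
      · have hwveq : w'' = v := eq_of_le_of_mdeg_ge hwv (le_of_eq heq3.symm)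
        have hile : iIdx h'' ≤ iIdx h := iIdx_min h'' p (hwveq.trans hv)
        rcases lt_or_eq_of_le hile with h4 | h4
        · exact h4
        · exfalso
          have hrep := rep_spec h''
          rw [h4] at hrep
          have h6 : Finsupp.single (jIdx h'') 1 + u (iIdx h) =
              Finsupp.single p 1 + u (iIdx h) := hrep.symm.trans (hwveq.trans hv)
          have h5 : Finsupp.single (jIdx h'') 1 = Finsupp.single p 1 :=
            add_right_cancel h6
          have hjp : jIdx h'' = p :=
            (Finsupp.single_left_inj one_ne_zero).mp h5
          exact not_colon_var hJ hu hd hw'' h'' (by rw [hjp, h4]; exact hpc)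
    have hkey : key u w'' < key u w := by
      rw [key_eq h'', key_eq h]
      have h6 : (iIdx h'' : ℕ) + 1 ≤ (iIdx h : ℕ) := Fin.lt_def.mp hi''
      have h7 : ((iIdx h'' : ℕ) + 1) * n ≤ (iIdx h : ℕ) * n := Nat.mul_le_mul_right n h6
      have h8 := (jIdx h'').isLt
      have h9 : ((iIdx h'' : ℕ) + 1) * n = (iIdx h'' : ℕ) * n + n := by ring
      linarith
    have hfinal : Finsupp.single p 1 ≤ w' - w := by
      rw [Finsupp.single_le_iff, Finsupp.tsub_apply]
      have h1 : 1 ≤ u (iIdx h') p - u (iIdx h) p := by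
        have h2 := Finsupp.single_le_iff.mp hple
        rwa [Finsupp.tsub_apply] at h2
      have h2 : u (iIdx h') p ≤ w' p := by
        have e := DFunLike.congr_fun (rep_spec h') p
        rw [Finsupp.add_apply] at e
        omega
      have h3 : w p = u (iIdx h) p := by
        have e := DFunLike.congr_fun (rep_spec h) p
        rwa [Finsupp.add_apply, Finsupp.single_eq_of_ne' (Ne.symm hpj), zero_add] at e
      omega
    exact ⟨p, w'', hw'', hkey, hsub, hfinal⟩

/-! ### The inductive step -/

lemma step (hJ : IsMonomialIdeal n K J) (hu : IsLinQuotOrder n K J u) (hd : DegIncr u) :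
    ∃ (r' : ℕ) (u' : Fin r' → Expo n),
      IsLinQuotOrder n K (maxIdeal n K * J) u' ∧ DegIncr u' := by
  classical
  have hfin : (MinGens n K (maxIdeal n K * J)).Finite := by
    apply Set.Finite.subset
      (Set.finite_range fun q : Fin n × Fin r => Finsupp.single q.1 1 + u q.2)
    intro w hw
    obtain ⟨i, hi⟩ := minGens_rep hJ hu hw
    obtain ⟨j, hj⟩ := (Finset.mem_filter.mp hi).2
    exact ⟨(j, i), hj.symm⟩
  set F := hfin.toFinset with hF
  have hmemF : ∀ {w : Expo n}, w ∈ F ↔ w ∈ MinGens n K (maxIdeal n K * J) := by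
    intro w; exact Set.Finite.mem_toFinset hfin
  have hinjOn : Set.InjOn (key u) F := by
    intro w hwF w' hw'F hk
    exact key_inj (minGens_rep hJ hu (hmemF.mp hwF)) (minGens_rep hJ hu (hmemF.mp hw'F)) hk
  set Fk := F.image (key u) with hFk
  have hcard : Fk.card = Fk.card := rfl
  set emb := Fk.orderEmbOfFin hcard with hemb
  have hsur : ∀ s : Fin Fk.card, ∃ w ∈ F, key u w = emb s := by
    intro s
    exact Finset.mem_image.mp (Finset.orderEmbOfFin_mem Fk hcard s)
  choose g hgF hgk using hsur
  have hgM : ∀ s, g s ∈ MinGens n K (maxIdeal n K * J) := fun s => hmemF.mp (hgF s)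
  have hkeylt : ∀ {s s' : Fin Fk.card}, s < s' ↔ key u (g s) < key u (g s') := by
    intro s s'
    rw [hgk, hgk]
    exact (emb.lt_iff_lt).symm
  have hginj : Function.Injective g := by
    intro s s' hss
    have : emb s = emb s' := by rw [← hgk, ← hgk, hss]
    exact emb.injective this
  have hgrange : Set.range g = MinGens n K (maxIdeal n K * J) := by
    apply Set.Subset.antisymm
    · rintro _ ⟨s, rfl⟩
      exact hgM s
    · intro w hw
      have hwF : w ∈ F := hmemF.mpr hw
      have hkw : key u w ∈ Fk := Finset.mem_image_of_mem _ hwF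
      have : key u w ∈ Set.range emb := by
        rw [Finset.range_orderEmbOfFin]
        exact hkw
      obtain ⟨s, hs⟩ := this
      refine ⟨s, hinjOn (hgF s) hwF (by rw [hgk, hs])⟩
  refine ⟨Fk.card, g, ⟨hginj, hgrange, ?_⟩, ?_⟩
  · -- colon ideals are generated by variables
    intro s
    set C := colonPrev n K g s with hC
    refine ⟨{p | (X p : MvPolynomial (Fin n) K) ∈ C}, le_antisymm ?_ ?_⟩
    · -- C ≤ span of variables
      have hCle : C ≤ Ideal.span (mon n K '' ((fun b => b - g s) '' (g '' {l | l < s}))) :=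
        colon_le
      refine le_trans hCle ?_
      rw [Ideal.span_le]
      rintro _ ⟨_, ⟨_, ⟨l, hl, rfl⟩, rfl⟩, rfl⟩
      have hlkey : key u (g l) < key u (g s) := hkeylt.mp hl
      obtain ⟨p, w'', hw''M, hw''k, hsub, hle⟩ :=
        main_witness hJ hu hd (hgM l) (hgM s) hlkey
      -- p is in the variable set
      have hpT : (X p : MvPolynomial (Fin n) K) ∈ C := by
        rw [hC]
        apply mem_colonPrev.mpr
        rw [X_eq_mon, mon_mul]
        apply mon_mem_span_mon.mpr
        obtain ⟨l'', hl''⟩ : ∃ l'', g l'' = w'' := by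
          rw [← hgrange] at hw''M; exact hw''M
        have hl''s : l'' < s := hkeylt.mpr (by rw [hl'']; exact hw''k)
        refine ⟨w'', ⟨l'', hl''s, hl''⟩, ?_⟩
        calc w'' ≤ w'' - g s + g s := le_tsub_add
        _ = Finsupp.single p 1 + g s := by rw [hsub]
      have heq : mon n K (g l - g s) = mon n K ((g l - g s) - Finsupp.single p 1) * X p := by
        rw [X_eq_mon, mon_mul, tsub_add_cancel_of_le hle]
      refine SetLike.mem_coe.mpr ?_
      rw [heq]
      exact Ideal.mul_mem_left _ _ (Ideal.subset_span ⟨p, hpT, rfl⟩)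
    · rw [Ideal.span_le]
      rintro _ ⟨p, hp, rfl⟩
      exact hp
  · -- degree increasing
    intro s s' hss
    have hks : key u (g s) ≤ key u (g s') := by
      rw [hgk, hgk]
      exact emb.le_iff_le.mpr hss
    have h1 := minGens_rep hJ hu (hgM s)
    have h2 := minGens_rep hJ hu (hgM s')
    rw [key_eq h1, key_eq h2] at hks
    have hile : iIdx h1 ≤ iIdx h2 := by
      rw [Fin.le_def]
      exact base_le (jIdx h1).isLt (jIdx h2).isLt hks
    have := hd _ _ hile
    rw [mdeg_rep h1, mdeg_rep h2]
    omega

lemma isMonomial_pow_mul {I : Ideal (MvPolynomial (Fin n) K)} (hI : IsMonomialIdeal n K I)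
    (k : ℕ) : IsMonomialIdeal n K (maxIdeal n K ^ k * I) := by
  induction k with
  | zero => simpa using hI
  | succ k ih =>
    have heq : maxIdeal n K ^ (k + 1) * I = maxIdeal n K * (maxIdeal n K ^ k * I) := by
      rw [pow_succ]; ring
    rw [heq]
    exact isMonomialIdeal_maxIdeal_mul ih

end LQ

end LQAux

/-- **(Ficarra–Herzog–Moradi, proof of Theorem 1.5).** If `m^t I` has linear quotients
with respect to a degree-increasing admissible order on `G(m^t I)` for some `t ≥ 0`,
then `m^k I` has linear quotients for all `k ≥ t`. -/
theorem linear_quotients_propagate (n : ℕ) (K : Type) [Field K]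
    (I : Ideal (MvPolynomial (Fin n) K)) (hI : IsMonomialIdeal n K I) (t : ℕ)
    (h : ∃ (r : ℕ) (u : Fin r → Expo n),
      IsLinQuotOrder n K (maxIdeal n K ^ t * I) u ∧ DegIncr u) :
    ∀ k : ℕ, t ≤ k → HasLinearQuotients n K (maxIdeal n K ^ k * I) := by
  have main : ∀ k : ℕ, t ≤ k → ∃ (r : ℕ) (u : Fin r → Expo n),
      IsLinQuotOrder n K (maxIdeal n K ^ k * I) u ∧ DegIncr u := by
    intro k
    induction k with
    | zero =>
      intro hk
      have ht : t = 0 := Nat.le_zero.mp hk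
      subst ht
      exact h
    | succ k ih =>
      intro hk
      rcases Nat.lt_or_ge t (k + 1) with hlt | hge
      · have hk' : t ≤ k := Nat.lt_succ_iff.mp hlt
        obtain ⟨r, u, hu, hd⟩ := ih hk'
        have hmono := LQ.isMonomial_pow_mul hI k
        obtain ⟨r', u', hu', hd'⟩ := LQ.step hmono hu hd
        have heq : maxIdeal n K ^ (k + 1) * I = maxIdeal n K * (maxIdeal n K ^ k * I) := by
          rw [pow_succ]; ring
        rw [heq]
        exact ⟨r', u', hu', hd'⟩
      · have ht : t = k + 1 := le_antisymm hk hge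
        subst ht
        exact h
  intro k hk
  obtain ⟨r, u, hu, _⟩ := main k hk
  exact ⟨r, u, hu⟩
end
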